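/- arXiv:0705.2904 — 6 statements merged into one kernel-verified Lean document; each statement's English description precedes it below -/
import Mathlib

section
/- Let ρ_{AB} be a density operator on H_A ⊗ H_B (finite-dimensional), let ρ_A = Tr_B ρ_{AB} and ρ_B = Tr_A ρ_{AB}, and let r_A = rank(ρ_A). Then r_A · (id_A ⊗ ρ_B) − ρ_{AB} ≥ 0, i.e., r_A · (id_A ⊗ ρ_B) − ρ_{AB} is positive semidefinite. -/
open scoped Classical ComplexOrder
open Kronecker
open Matrix

private lemma cs_complex {ι : Type*} [Fintype ι] (f g : ι → ℂ) :
    ‖∑ i, f i * g i‖ ^ 2 ≤ (∑ i, ‖f i‖ ^ 2) * (∑ i, ‖g i‖ ^ 2) := by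
  calc ‖∑ i, f i * g i‖ ^ 2 ≤ (∑ i, ‖f i‖ * ‖g i‖) ^ 2 := by
        refine pow_le_pow_left₀ (norm_nonneg _) ?_ 2
        refine (norm_sum_le _ _).trans (le_of_eq ?_)
        simp [norm_mul]
      _ ≤ _ := Finset.sum_mul_sq_le_sq_mul_sq _ _ _

private lemma quad_form {m n : Type*} [Fintype m] [Fintype n] (N : Matrix m n ℂ) (x : n → ℂ) :
    dotProduct (star x) ((Nᴴ * N).mulVec x)
      = ((∑ k, ‖N.mulVec x k‖ ^ 2 : ℝ) : ℂ) := by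
  rw [← Matrix.mulVec_mulVec, Matrix.dotProduct_mulVec, ← Matrix.star_mulVec]
  simp only [dotProduct, Pi.star_apply, Complex.star_def, RCLike.conj_mul]
  push_cast
  rfl

set_option maxHeartbeats 1000000 in
/-- For a density operator `ρ_{AB}` with marginals `ρ_A`, `ρ_B` and `r_A = rank ρ_A`,
the operator `r_A · (id_A ⊗ ρ_B) − ρ_{AB}` is positive semidefinite. -/
theorem rank_smul_id_kron_marginal_sub_self_posSemidef
    {a b : Type*} [Fintype a] [DecidableEq a] [Fintype b] [DecidableEq b]
    (ρ : Matrix (a × b) (a × b) ℂ) (hρ : ρ.PosSemidef) (htr : ρ.trace = 1) :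
    ((((Matrix.of fun i i' : a => ∑ j, ρ (i, j) (i', j)).rank : ℂ)) •
        ((1 : Matrix a a ℂ) ⊗ₖ (Matrix.of fun j j' : b => ∑ i, ρ (i, j) (i, j')))
      - ρ).PosSemidef := by
  classical
  obtain ⟨W, hW⟩ : ∃ W : Matrix (a × b) (a × b) ℂ, ρ = Wᴴ * W := by
    open scoped MatrixOrder Matrix.Norms.L2Operator in
    obtain ⟨W, hW⟩ := CStarAlgebra.nonneg_iff_eq_star_mul_self.mp hρ.nonneg
    exact ⟨W, hW⟩
  set A : Matrix a a ℂ := Matrix.of fun i i' : a => ∑ j, ρ (i, j) (i', j) with hA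
  set B : Matrix b b ℂ := Matrix.of fun j j' : b => ∑ i, ρ (i, j) (i, j') with hB
  have hρH := hρ.1
  have hAH : A.IsHermitian := by
    ext i i'
    rw [Matrix.conjTranspose_apply]
    show star (∑ j, ρ (i', j) (i, j)) = ∑ j, ρ (i, j) (i', j)
    rw [star_sum]
    exact Finset.sum_congr rfl fun j _ => hρH.apply _ _
  have hBH : B.IsHermitian := by
    ext j j'
    rw [Matrix.conjTranspose_apply]
    show star (∑ i, ρ (i, j') (i, j)) = ∑ i, ρ (i, j) (i, j')
    rw [star_sum]
    exact Finset.sum_congr rfl fun i _ => hρH.apply _ _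
  set ev : (a → ℂ) → b → (a × b → ℂ) :=
    fun v j p => v p.1 * (if p.2 = j then 1 else 0) with hev
  have key : ∀ v : a → ℂ, dotProduct (star v) (A.mulVec v)
      = ∑ j, dotProduct (star (ev v j)) (ρ.mulVec (ev v j)) := by
    intro v
    simp only [dotProduct, Matrix.mulVec, Pi.star_apply, hev, hA, Matrix.of_apply,
      Fintype.sum_prod_type, star_mul', apply_ite, star_one, star_zero, ite_mul, one_mul,
      zero_mul, mul_ite, mul_one, mul_zero, Finset.sum_ite_eq', Finset.mem_univ, if_true]
    rw [Finset.sum_comm]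
    refine Finset.sum_congr rfl fun i _ => ?_
    simp only [Finset.mul_sum, Finset.sum_mul]
    rw [Finset.sum_comm]
  have hApsd : A.PosSemidef := Matrix.posSemidef_iff_dotProduct_mulVec.mpr ⟨hAH, fun v => by
    rw [key v]; exact Finset.sum_nonneg fun j _ => hρ.dotProduct_mulVec_nonneg _⟩
  -- spectral data of A
  set U : Matrix a a ℂ := ↑hAH.eigenvectorUnitary with hU
  set μ : a → ℝ := hAH.eigenvalues with hμ
  set d : a → ℂ := fun i => if μ i ≠ 0 then 1 else 0 with hd
  set D : Matrix a a ℂ := Matrix.diagonal d with hD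
  set Λ : Matrix a a ℂ := Matrix.diagonal (RCLike.ofReal ∘ μ) with hΛ
  have hspec : A = U * Λ * star U := hAH.spectral_theorem
  have hUU : star U * U = 1 := hAH.eigenvectorUnitary.prop.1
  set P : Matrix a a ℂ := U * D * star U with hP
  have cancel : ∀ Z : Matrix a a ℂ, star U * (U * Z) = Z := fun Z => by
    rw [← Matrix.mul_assoc, hUU, Matrix.one_mul]
  have hfun : ∀ (f g : a → ℂ), (∀ i, f i = g i) → Matrix.diagonal f = Matrix.diagonal g :=
    fun f g h => by rw [funext h]
  have hΛD : Λ * D = Λ := by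
    rw [hD, hΛ, Matrix.diagonal_mul_diagonal]
    exact hfun _ _ fun i => by by_cases h : μ i = 0 <;> simp [hd, h]
  have hDD : D * D = D := by
    rw [hD, Matrix.diagonal_mul_diagonal]
    exact hfun _ _ fun i => by by_cases h : μ i = 0 <;> simp [hd, h]
  have hAP : A * P = A := by
    rw [hP, hspec]
    simp only [Matrix.mul_assoc, cancel]
    rw [← Matrix.mul_assoc Λ D, hΛD]
  have hPP : P * P = P := by
    rw [hP]
    simp only [Matrix.mul_assoc, cancel]
    rw [← Matrix.mul_assoc D D, hDD]
  have hdstar : star d = d := by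
    funext i
    by_cases h : μ i = 0 <;> simp [hd, h]
  have hPH : P.IsHermitian := by
    show Pᴴ = P
    rw [hP]
    simp [Matrix.conjTranspose_mul, Matrix.star_eq_conjTranspose, hD,
      Matrix.diagonal_conjTranspose, hdstar, Matrix.mul_assoc]
  have htrP : P.trace = (A.rank : ℂ) := by
    rw [hP, Matrix.trace_mul_comm (U * D) (star U), ← Matrix.mul_assoc, hUU, Matrix.one_mul]
    rw [hD, Matrix.trace_diagonal, hd]
    rw [Finset.sum_boole]
    rw [hAH.rank_eq_card_non_zero_eigs]
    rw [Fintype.card_subtype]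
  have hPfro : ∑ i, ∑ i', ‖P i i'‖ ^ 2 = (A.rank : ℝ) := by
    have h1 : (Pᴴ * P).trace = (A.rank : ℂ) := by rw [hPH, hPP, htrP]
    have h2 : (Pᴴ * P).trace = ((∑ i, ∑ i', ‖P i i'‖ ^ 2 : ℝ) : ℂ) := by
      simp only [Matrix.trace, Matrix.diag_apply, Matrix.mul_apply, Matrix.conjTranspose_apply,
        Complex.star_def, RCLike.conj_mul]
      push_cast
      exact Finset.sum_comm ..
    rw [h2] at h1
    exact_mod_cast h1
  -- support facts
  have hAQ : A * (1 - P) = 0 := by rw [Matrix.mul_sub, Matrix.mul_one, hAP, sub_self]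
  have hker : ∀ v : a → ℂ, A.mulVec v = 0 → ∀ j, ρ.mulVec (ev v j) = 0 := by
    intro v hv j
    rw [← (hρ.dotProduct_mulVec_zero_iff _)]
    have h0 : ∑ j, dotProduct (star (ev v j)) (ρ.mulVec (ev v j)) = 0 := by
      rw [← key v, hv, dotProduct_zero]
    exact (Finset.sum_eq_zero_iff_of_nonneg (fun j _ => hρ.dotProduct_mulVec_nonneg (ev v j))).mp h0 j
      (Finset.mem_univ j)
  have hρQ : ρ * ((1 - P) ⊗ₖ (1 : Matrix b b ℂ)) = 0 := by
    ext p q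
    have hv : A.mulVec (fun i1 => (1 - P) i1 q.1) = 0 := by
      funext i0
      have h3 := congrFun (congrFun hAQ i0) q.1
      simpa [Matrix.mul_apply, Matrix.mulVec, dotProduct] using h3
    have h2 := congrFun (hker _ hv q.2) p
    simp only [Matrix.mulVec, dotProduct, hev, Fintype.sum_prod_type, mul_ite, mul_one,
      mul_zero, Finset.sum_ite_eq', Finset.mem_univ, if_true] at h2
    simp only [Matrix.mul_apply, Matrix.kroneckerMap_apply, Matrix.one_apply,
      Fintype.sum_prod_type, Matrix.zero_apply, mul_ite, mul_one, mul_zero, ite_mul, zero_mul,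
      Finset.sum_ite_eq', Finset.mem_univ, if_true]
    simpa using h2
  have hWQ : W * ((1 - P) ⊗ₖ (1 : Matrix b b ℂ)) = 0 := by
    have h1 : (W * ((1 - P) ⊗ₖ (1 : Matrix b b ℂ)))ᴴ * (W * ((1 - P) ⊗ₖ (1 : Matrix b b ℂ)))
        = ((1 - P) ⊗ₖ (1 : Matrix b b ℂ))ᴴ * (ρ * ((1 - P) ⊗ₖ (1 : Matrix b b ℂ))) := by
      rw [hW]
      simp only [Matrix.conjTranspose_mul, Matrix.mul_assoc]
    rw [hρQ, Matrix.mul_zero] at h1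
    exact Matrix.conjTranspose_mul_self_eq_zero.mp h1
  have hWP : W * (P ⊗ₖ (1 : Matrix b b ℂ)) = W := by
    have hsub : (1 - P) ⊗ₖ (1 : Matrix b b ℂ)
        = 1 - P ⊗ₖ (1 : Matrix b b ℂ) := by
      rw [← Matrix.one_kronecker_one (m := a) (n := b) (α := ℂ)]
      ext pq pq'
      by_cases h2 : pq.2 = pq'.2 <;> by_cases h1 : pq.1 = pq'.1 <;>
        simp [Matrix.kroneckerMap_apply, Matrix.sub_apply, sub_mul, Matrix.one_apply, h1, h2, Prod.ext_iff]
    rw [hsub, Matrix.mul_sub, Matrix.mul_one] at hWQ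
    exact (sub_eq_zero.mp hWQ).symm
  have hWPe : ∀ (k : a × b) (i : a) (j : b),
      ∑ i'', W k (i'', j) * P i'' i = W k (i, j) := by
    intro k i j
    have h1 := congrFun (congrFun hWP k) (i, j)
    simpa [Matrix.mul_apply, Fintype.sum_prod_type, Matrix.kroneckerMap_apply, Matrix.one_apply,
      mul_ite, mul_one, mul_zero, Finset.sum_ite_eq', Finset.mem_univ, if_true,
      mul_comm] using h1
  -- Hermitian part
  have h1kB : ((1 : Matrix a a ℂ) ⊗ₖ B).IsHermitian := by
    ext ⟨i, j⟩ ⟨i', j'⟩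
    rw [Matrix.conjTranspose_apply]
    show star ((1 : Matrix a a ℂ) i' i * B j' j) = (1 : Matrix a a ℂ) i i' * B j j'
    rw [star_mul']
    congr 1
    · rw [← Matrix.conjTranspose_apply, Matrix.conjTranspose_one]
    · exact hBH.apply _ _
  refine Matrix.posSemidef_iff_dotProduct_mulVec.mpr ⟨?_, ?_⟩
  · show _ᴴ = _
    rw [Matrix.conjTranspose_sub, Matrix.conjTranspose_smul, star_natCast, h1kB, hρH]
  intro x
  set y : a × b → a → a → ℂ := fun k i i' => ∑ j, W k (i, j) * x (i', j) with hy
  have hyW : ∀ k, W.mulVec x k = ∑ i, y k i i := by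
    intro k
    simp [Matrix.mulVec, dotProduct, Fintype.sum_prod_type, hy]
  have hρx : dotProduct (star x) (ρ.mulVec x)
      = ((∑ k, ‖∑ i, y k i i‖ ^ 2 : ℝ) : ℂ) := by
    rw [hW, quad_form]
    norm_cast
    exact Finset.sum_congr rfl fun k _ => by rw [hyW]
  set C : Matrix ((a × b) × a × a) (a × b) ℂ :=
    Matrix.of fun km q => (if km.2.2 = q.1 then 1 else 0) * W km.1 (km.2.1, q.2) with hC
  have hkB : (1 : Matrix a a ℂ) ⊗ₖ B = Cᴴ * C := by
    ext ⟨i, j⟩ ⟨i', j'⟩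
    show (1 : Matrix a a ℂ) i i' * B j j' = (Cᴴ * C) (i, j) (i', j')
    rw [hB]
    conv_lhs => rw [hW]
    by_cases hii : i = i'
    · subst hii
      simp only [Matrix.mul_apply, Matrix.conjTranspose_apply, hC, Matrix.of_apply,
        Matrix.one_apply_eq, one_mul, Fintype.sum_prod_type, star_mul', apply_ite, star_one,
        star_zero, ite_mul, one_mul, zero_mul, mul_ite, mul_one, mul_zero,
        Finset.sum_ite_eq', Finset.mem_univ, if_true]
      rw [Finset.sum_comm]
      exact Finset.sum_congr rfl fun m _ => Finset.sum_comm ..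
    · simp only [Matrix.mul_apply, Matrix.conjTranspose_apply, hC, Matrix.of_apply,
        Matrix.one_apply, hii, if_false, zero_mul, Fintype.sum_prod_type, star_mul', apply_ite,
        star_one, star_zero, ite_mul, one_mul, zero_mul, mul_ite, mul_one, mul_zero,
        Finset.sum_ite_eq', Finset.mem_univ, if_true]
      simp [Ne.symm hii]
  have hCx : ∀ km : (a × b) × a × a, C.mulVec x km = y km.1 km.2.1 km.2.2 := by
    intro km
    simp [hC, Matrix.mulVec, dotProduct, Fintype.sum_prod_type, hy, ite_mul, one_mul,
      zero_mul, mul_ite, mul_zero, Finset.sum_ite_eq, Finset.sum_ite_eq', Finset.mem_univ]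
  have hBx : dotProduct (star x) (((1 : Matrix a a ℂ) ⊗ₖ B).mulVec x)
      = ((∑ k, ∑ p : a × a, ‖y k p.1 p.2‖ ^ 2 : ℝ) : ℂ) := by
    rw [hkB, quad_form]
    norm_cast
    rw [Fintype.sum_prod_type]
    exact Finset.sum_congr rfl fun k _ => Finset.sum_congr rfl fun p _ => by rw [hCx]
  have hsupp : ∀ k i i', y k i i' = ∑ i'', P i'' i * y k i'' i' := by
    intro k i i'
    calc y k i i' = ∑ j, (∑ i'', W k (i'', j) * P i'' i) * x (i', j) := by
          rw [hy]
          exact Finset.sum_congr rfl fun j _ => by rw [hWPe]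
      _ = ∑ i'', P i'' i * y k i'' i' := by
          simp only [Finset.sum_mul, hy, Finset.mul_sum]
          rw [Finset.sum_comm]
          exact Finset.sum_congr rfl fun i'' _ => Finset.sum_congr rfl fun j _ => by ring
  have hPsum : ∑ p : a × a, ‖P p.1 p.2‖ ^ 2 = (A.rank : ℝ) := by
    rw [Fintype.sum_prod_type]; exact hPfro
  have perk : ∀ k, ‖∑ i, y k i i‖ ^ 2 ≤ (A.rank : ℝ) * ∑ p : a × a, ‖y k p.1 p.2‖ ^ 2 := by
    intro k
    have h1 : ∑ i, y k i i = ∑ p : a × a, P p.1 p.2 * y k p.1 p.2 := by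
      conv_rhs => rw [Fintype.sum_prod_type]
      rw [show (∑ i, y k i i) = ∑ i, ∑ i'', P i'' i * y k i'' i from
        Finset.sum_congr rfl fun i _ => hsupp k i i]
      exact Finset.sum_comm ..
    rw [h1]
    calc ‖∑ p : a × a, P p.1 p.2 * y k p.1 p.2‖ ^ 2
        ≤ (∑ p : a × a, ‖P p.1 p.2‖ ^ 2) * (∑ p : a × a, ‖y k p.1 p.2‖ ^ 2) := cs_complex _ _
      _ = _ := by rw [hPsum]
  rw [Matrix.sub_mulVec, dotProduct_sub, Matrix.smul_mulVec,
    dotProduct_smul, hρx, hBx, smul_eq_mul]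
  have hcast : ((A.rank : ℂ)) = ((A.rank : ℝ) : ℂ) := by push_cast; rfl
  rw [hcast, ← Complex.ofReal_mul, ← Complex.ofReal_sub, Complex.zero_le_real, sub_nonneg]
  calc ∑ k, ‖∑ i, y k i i‖ ^ 2
      ≤ ∑ k, (A.rank : ℝ) * ∑ p : a × a, ‖y k p.1 p.2‖ ^ 2 :=
        Finset.sum_le_sum fun k _ => perk k
    _ = _ := by rw [← Finset.mul_sum]
end

section
/- Let |Ψ⟩ = Σ_{i=1}^{r} √α_i |φ_i⟩ ⊗ |ψ_i⟩ be a Schmidt decomposition of a unit vector in H_A ⊗ H_B with r terms, ρ_{AB} = |Ψ⟩⟨Ψ| and ρ_B = Tr_A ρ_{AB}. Then for every vector |Φ⟩ ∈ H_A ⊗ H_B, ⟨Φ| ρ_{AB} |Φ⟩ ≤ r · ⟨Φ| (id_A ⊗ ρ_B) |Φ⟩. -/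
open scoped Classical

/-- The Schmidt-decomposed vector `|Ψ⟩ = Σ_i √α_i |φ_i⟩ ⊗ |ψ_i⟩`. -/
noncomputable def schmidtVec {a b : Type*} {r : ℕ} (α : Fin r → ℝ)
    (φ : Fin r → a → ℂ) (ψ : Fin r → b → ℂ) : a × b → ℂ :=
  fun p => ∑ i, (Real.sqrt (α i) : ℂ) * φ i p.1 * ψ i p.2

private lemma sum_comm3 {α β γ M : Type*} [Fintype α] [Fintype β] [Fintype γ]
    [AddCommMonoid M] (f : α → β → γ → M) :
    ∑ x, ∑ y, ∑ z, f x y z = ∑ z, ∑ x, ∑ y, f x y z := by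
  have h1 : ∀ x, ∑ y, ∑ z, f x y z = ∑ z, ∑ y, f x y z := fun x => Finset.sum_comm
  simp_rw [h1]
  exact Finset.sum_comm

private lemma sum_comm3' {α β γ M : Type*} [Fintype α] [Fintype β] [Fintype γ]
    [AddCommMonoid M] (f : α → β → γ → M) :
    ∑ x, ∑ y, ∑ z, f x y z = ∑ y, ∑ z, ∑ x, f x y z := by
  rw [Finset.sum_comm]
  exact Finset.sum_congr rfl fun y _ => Finset.sum_comm

/-- For `|Ψ⟩ = Σ_{i=1}^r √α_i |φ_i⟩⊗|ψ_i⟩` a unit vector (Schmidt decomposition with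
`r` terms), `ρ_{AB} = |Ψ⟩⟨Ψ|` and `ρ_B = Tr_A ρ_{AB}`, every vector `|Φ⟩` satisfies
`⟨Φ|ρ_{AB}|Φ⟩ ≤ r · ⟨Φ|(id_A ⊗ ρ_B)|Φ⟩`. -/
theorem pure_state_le_rank_smul_id_kron_marginal
    {a b : Type*} [Fintype a] [Fintype b] (r : ℕ)
    (α : Fin r → ℝ) (hα : ∀ i, 0 < α i) (hαs : ∑ i, α i = 1)
    (φ : Fin r → a → ℂ) (ψ : Fin r → b → ℂ)
    (hφ : ∀ i j, ∑ k, star (φ i k) * φ j k = if i = j then 1 else 0)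
    (hψ : ∀ i j, ∑ k, star (ψ i k) * ψ j k = if i = j then 1 else 0)
    (Φ : a × b → ℂ) :
    (∑ p, ∑ q, star (Φ p) * (schmidtVec α φ ψ p * star (schmidtVec α φ ψ q)) * Φ q).re ≤
      (r : ℝ) *
        (∑ i : a, ∑ j : b, ∑ j' : b,
          star (Φ (i, j)) *
            (∑ i' : a, schmidtVec α φ ψ (i', j) * star (schmidtVec α φ ψ (i', j'))) *
            Φ (i, j')).re := by
  classical
  set Ψ : a × b → ℂ := schmidtVec α φ ψ with hΨ
  set d : Fin r → a → ℂ := fun k i => ∑ j, star (Φ (i, j)) * ψ k j with hd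
  set e : Fin r → ℂ := fun k => ∑ i, φ k i * d k i with he
  set S : ℂ := ∑ k, (Real.sqrt (α k) : ℂ) * e k with hSdef
  -- ⟨Φ, Ψ⟩ = S
  have hP : (∑ p : a × b, star (Φ p) * Ψ p) = S := by
    rw [hSdef]
    simp only [hΨ, schmidtVec, he, hd, Finset.mul_sum, Fintype.sum_prod_type]
    rw [sum_comm3 (fun (i : a) (j : b) (k : Fin r) =>
      star (Φ (i, j)) * ((Real.sqrt (α k) : ℂ) * φ k i * ψ k j))]
    refine Finset.sum_congr rfl fun k _ => Finset.sum_congr rfl fun i _ =>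
      Finset.sum_congr rfl fun j _ => by ring
  -- LHS = S * star S
  have hL : (∑ p, ∑ q, star (Φ p) * (Ψ p * star (Ψ q)) * Φ q) = S * star S := by
    have h1 : ∀ p q : a × b, star (Φ p) * (Ψ p * star (Ψ q)) * Φ q
        = (star (Φ p) * Ψ p) * star (star (Φ q) * Ψ q) := by
      intro p q; simp only [star_mul, star_star]; ring
    simp only [h1]
    rw [← Finset.sum_mul_sum, hP]
    congr 1
    rw [← hP]
    exact (star_sum _ _).symm
  -- marginal computation
  have hQ : ∀ j j' : b, (∑ i' : a, Ψ (i', j) * star (Ψ (i', j')))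
      = ∑ k, (α k : ℂ) * (ψ k j * star (ψ k j')) := by
    intro j j'
    have horth : ∀ k l : Fin r, (∑ i' : a, φ k i' * star (φ l i'))
        = if k = l then 1 else 0 := by
      intro k l
      have := congrArg star (hφ k l)
      simpa [star_sum, star_mul, mul_comm, apply_ite (star : ℂ → ℂ)] using this
    simp only [hΨ, schmidtVec]
    calc ∑ i' : a, (∑ k, (Real.sqrt (α k) : ℂ) * φ k i' * ψ k j) *
            star (∑ l, (Real.sqrt (α l) : ℂ) * φ l i' * ψ l j')
        = ∑ k, ∑ l, ((Real.sqrt (α k) : ℂ) * (Real.sqrt (α l) : ℂ) *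
            (ψ k j * star (ψ l j'))) * (∑ i' : a, φ k i' * star (φ l i')) := by
          simp only [star_sum, star_mul, Finset.sum_mul_sum]
          rw [sum_comm3' (fun (i' : a) (k : Fin r) (l : Fin r) =>
            (Real.sqrt (α k) : ℂ) * φ k i' * ψ k j *
              (star (ψ l j') * (star (φ l i') * star ((Real.sqrt (α l) : ℂ)))))]
          refine Finset.sum_congr rfl fun k _ => Finset.sum_congr rfl fun l _ => ?_
          rw [Finset.mul_sum]
          refine Finset.sum_congr rfl fun i' _ => ?_
          simp only [Complex.star_def, Complex.conj_ofReal]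
          ring
      _ = ∑ k, (α k : ℂ) * (ψ k j * star (ψ k j')) := by
          refine Finset.sum_congr rfl fun k _ => ?_
          rw [Finset.sum_eq_single k]
          · rw [horth k k, if_pos rfl, mul_one, ← Complex.ofReal_mul,
              Real.mul_self_sqrt (hα k).le]
          · intro l _ hl
            rw [horth k l, if_neg (fun h => hl h.symm), mul_zero]
          · intro h; exact absurd (Finset.mem_univ k) h
  -- RHS inner value
  have hR : (∑ i : a, ∑ j : b, ∑ j' : b,
        star (Φ (i, j)) * (∑ i' : a, Ψ (i', j) * star (Ψ (i', j'))) * Φ (i, j'))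
      = ∑ k, (α k : ℂ) * ∑ i, d k i * star (d k i) := by
    simp only [hQ]
    have hstep : ∀ i : a, (∑ j : b, ∑ j' : b,
        star (Φ (i, j)) * (∑ k, (α k : ℂ) * (ψ k j * star (ψ k j'))) * Φ (i, j'))
        = ∑ k, (α k : ℂ) * (d k i * star (d k i)) := by
      intro i
      have hdi : ∀ k, star (d k i) = ∑ j' : b, star (ψ k j') * Φ (i, j') := by
        intro k
        simp only [hd, star_sum, star_mul, star_star]
      calc (∑ j : b, ∑ j' : b,
            star (Φ (i, j)) * (∑ k, (α k : ℂ) * (ψ k j * star (ψ k j'))) * Φ (i, j'))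
          = ∑ k, ∑ j : b, ∑ j' : b, (α k : ℂ) *
              ((star (Φ (i, j)) * ψ k j) * (star (ψ k j') * Φ (i, j'))) := by
            simp only [Finset.mul_sum, Finset.sum_mul]
            rw [sum_comm3 (fun (j : b) (j' : b) (k : Fin r) =>
              star (Φ (i, j)) * ((α k : ℂ) * (ψ k j * star (ψ k j'))) * Φ (i, j'))]
            refine Finset.sum_congr rfl fun k _ => Finset.sum_congr rfl fun j _ =>
              Finset.sum_congr rfl fun j' _ => by ring
        _ = ∑ k, (α k : ℂ) * (d k i * star (d k i)) := by
            refine Finset.sum_congr rfl fun k _ => ?_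
            rw [hdi k, hd]
            simp only [Finset.sum_mul_sum, Finset.mul_sum]
            rw [Finset.sum_comm]
            refine Finset.sum_congr rfl fun j' _ => ?_
            rw [Finset.sum_mul, Finset.mul_sum]
    simp only [hstep]
    rw [Finset.sum_comm]
    simp [Finset.mul_sum]
  rw [hL, hR]
  -- pass to real numbers
  have hLre : (S * star S).re = Complex.normSq S := by
    rw [Complex.star_def, Complex.mul_conj, Complex.ofReal_re]
  have hRre : (∑ k, (α k : ℂ) * ∑ i, d k i * star (d k i)).re
      = ∑ k, α k * ∑ i, Complex.normSq (d k i) := by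
    have : (∑ k, (α k : ℂ) * ∑ i, d k i * star (d k i))
        = ((∑ k, α k * ∑ i, Complex.normSq (d k i) : ℝ) : ℂ) := by
      push_cast
      refine Finset.sum_congr rfl fun k _ => ?_
      congr 1
      exact Finset.sum_congr rfl fun i _ => by
        rw [Complex.star_def, Complex.mul_conj]
    rw [this, Complex.ofReal_re]
  rw [hLre, hRre]
  -- Cauchy–Schwarz steps
  have hnormS : ‖S‖ ≤ ∑ k, Real.sqrt (α k) * ‖e k‖ := by
    refine (norm_sum_le _ _).trans (le_of_eq (Finset.sum_congr rfl fun k _ => ?_))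
    rw [norm_mul, Complex.norm_real, Real.norm_eq_abs,
      abs_of_nonneg (Real.sqrt_nonneg _)]
  have hφnorm : ∀ k, (∑ i, ‖φ k i‖ ^ 2) = 1 := by
    intro k
    have h := hφ k k
    rw [if_pos rfl] at h
    have : (∑ i, star (φ k i) * φ k i) = ((∑ i, ‖φ k i‖ ^ 2 : ℝ) : ℂ) := by
      push_cast
      refine Finset.sum_congr rfl fun i _ => ?_
      rw [Complex.star_def, mul_comm, Complex.mul_conj, Complex.normSq_eq_norm_sq,
        Complex.ofReal_pow]
    rw [this] at h
    exact_mod_cast h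
  have he2 : ∀ k, ‖e k‖ ^ 2 ≤ ∑ i, Complex.normSq (d k i) := by
    intro k
    have h1 : ‖e k‖ ≤ ∑ i, ‖φ k i‖ * ‖d k i‖ :=
      (norm_sum_le _ _).trans (le_of_eq (Finset.sum_congr rfl fun i _ => norm_mul _ _))
    have h2 := Finset.sum_mul_sq_le_sq_mul_sq Finset.univ
      (fun i => ‖φ k i‖) (fun i => ‖d k i‖)
    have h3 : ‖e k‖ ^ 2 ≤ (∑ i, ‖φ k i‖ * ‖d k i‖) ^ 2 :=
      pow_le_pow_left₀ (norm_nonneg _) h1 2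
    have h4 : (∑ i, ‖d k i‖ ^ 2) = ∑ i, Complex.normSq (d k i) :=
      Finset.sum_congr rfl fun i _ => by
        rw [Complex.normSq_eq_norm_sq]
    calc ‖e k‖ ^ 2 ≤ (∑ i, ‖φ k i‖ * ‖d k i‖) ^ 2 := h3
      _ ≤ (∑ i, ‖φ k i‖ ^ 2) * ∑ i, ‖d k i‖ ^ 2 := h2
      _ = ∑ i, Complex.normSq (d k i) := by rw [hφnorm k, one_mul, h4]
  have hCS : (∑ k, Real.sqrt (α k) * ‖e k‖) ^ 2
      ≤ (r : ℝ) * ∑ k, α k * ‖e k‖ ^ 2 := by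
    have h := Finset.sum_mul_sq_le_sq_mul_sq Finset.univ
      (fun _ : Fin r => (1 : ℝ)) (fun k => Real.sqrt (α k) * ‖e k‖)
    simp only [one_mul, one_pow, Finset.sum_const, Finset.card_univ,
      Fintype.card_fin, nsmul_eq_mul, mul_one] at h
    refine h.trans (le_of_eq ?_)
    congr 1
    refine Finset.sum_congr rfl fun k _ => ?_
    rw [mul_pow, Real.sq_sqrt (hα k).le]
  calc Complex.normSq S = ‖S‖ ^ 2 := by
        rw [Complex.normSq_eq_norm_sq]
    _ ≤ (∑ k, Real.sqrt (α k) * ‖e k‖) ^ 2 := pow_le_pow_left₀ (norm_nonneg _) hnormS 2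
    _ ≤ (r : ℝ) * ∑ k, α k * ‖e k‖ ^ 2 := hCS
    _ ≤ (r : ℝ) * ∑ k, α k * ∑ i, Complex.normSq (d k i) := by
        gcongr with k hk
        · exact (hα k).le
        · exact he2 k
end

section
/- For any type Q of length-n sequences over a finite alphabet X, the probability under Qⁿ of the type class of Q satisfies Qⁿ(T_Q^n(X)) ≥ (n+1)^{−(|X|−1)}. -/
open scoped Classical

/-- The empirical type of a sequence `x ∈ Xⁿ`: `P_x(a) = |{i : x i = a}|/n`. -/
noncomputable def empType {X : Type*} [Fintype X] [DecidableEq X] {n : ℕ}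
    (x : Fin n → X) (a : X) : ℝ :=
  ((Finset.univ.filter (fun i => x i = a)).card : ℝ) / n

section Aux

open Finset

variable {X : Type*} [Fintype X] [DecidableEq X] {n : ℕ}

/-- Count of occurrences of `a` in `x`. -/
def cnt (x : Fin n → X) (a : X) : ℕ := (Finset.univ.filter (fun i => x i = a)).card

lemma cnt_eq_card (x : Fin n → X) (a : X) : cnt x a = Fintype.card {i // x i = a} := by
  rw [Fintype.card_subtype]; rfl

lemma sum_cnt (x : Fin n → X) : ∑ a, cnt x a = n := by
  have h := Finset.card_eq_sum_card_fiberwise (f := x) (s := Finset.univ)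
    (t := Finset.univ) (fun i _ => Finset.mem_univ _)
  simp only [Finset.card_univ, Fintype.card_fin] at h
  exact h.symm

lemma cnt_comp_perm (x : Fin n → X) (σ : Equiv.Perm (Fin n)) (a : X) :
    cnt (x ∘ σ) a = cnt x a := by
  rw [cnt_eq_card, cnt_eq_card]
  exact Fintype.card_congr (Equiv.subtypeEquiv σ (fun i => Iff.rfl))

/-- The fiber of `σ ↦ x0 ∘ σ` over `x` is equivalent to a family of bijections of fibers. -/
def permFiberEquiv (x0 x : Fin n → X) :
    {σ : Equiv.Perm (Fin n) // x0 ∘ σ = x} ≃ ∀ a, ({i // x i = a} ≃ {i // x0 i = a}) where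
  toFun σ a := Equiv.subtypeEquiv σ.1 (fun i => by rw [show x0 (σ.1 i) = x i from congrFun σ.2 i])
  invFun e := ⟨(Equiv.sigmaFiberEquiv x).symm.trans
      ((Equiv.sigmaCongrRight e).trans (Equiv.sigmaFiberEquiv x0)), by
    funext i
    exact ((e (x i)) ⟨i, rfl⟩).2⟩
  left_inv σ := by
    apply Subtype.ext
    apply Equiv.ext
    intro i
    rfl
  right_inv e := by
    funext a
    apply Equiv.ext
    rintro ⟨i, hi⟩
    apply Subtype.ext
    subst hi
    rfl

lemma card_perm_fiber (x0 x : Fin n → X) (h : ∀ a, cnt x a = cnt x0 a) :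
    (Finset.univ.filter (fun σ : Equiv.Perm (Fin n) => x0 ∘ σ = x)).card
      = ∏ a, (cnt x a).factorial := by
  rw [← Fintype.card_subtype, Fintype.card_congr (permFiberEquiv x0 x), Fintype.card_pi]
  refine Finset.prod_congr rfl fun a _ => ?_
  have e : {i // x i = a} ≃ {i // x0 i = a} :=
    Fintype.equivOfCardEq (by rw [← cnt_eq_card, ← cnt_eq_card, h])
  rw [Fintype.card_equiv e, ← cnt_eq_card]

/-- Counting identity: the type class of `x0` has cardinality `n! / ∏ₐ (cnt x0 a)!`. -/
lemma card_typeclass (x0 : Fin n → X) :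
    (Finset.univ.filter (fun x : Fin n → X => ∀ a, cnt x a = cnt x0 a)).card
      * ∏ a, (cnt x0 a).factorial = n.factorial := by
  have hmap : ∀ σ ∈ (Finset.univ : Finset (Equiv.Perm (Fin n))),
      x0 ∘ σ ∈ Finset.univ.filter (fun x : Fin n → X => ∀ a, cnt x a = cnt x0 a) := by
    intro σ _
    simp only [Finset.mem_filter, Finset.mem_univ, true_and]
    exact fun a => cnt_comp_perm x0 σ a
  have h := Finset.card_eq_sum_card_fiberwise hmap
  rw [Finset.card_univ, Fintype.card_perm, Fintype.card_fin] at h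
  rw [h]
  rw [Finset.sum_congr rfl (fun x hx => ?_), Finset.sum_const, smul_eq_mul]
  have hx' : ∀ a, cnt x a = cnt x0 a := (Finset.mem_filter.mp hx).2
  rw [card_perm_fiber x0 x hx']
  exact Finset.prod_congr rfl fun a _ => by rw [hx' a]

/-- `a! ≤ b! * a^(a-b)` in the rearranged form below. -/
lemma factorial_le_mul_pow (b d : ℕ) :
    (b + d).factorial ≤ b.factorial * (b + d) ^ d := by
  induction d with
  | zero => simp
  | succ d ih =>
    have h1 : (b + d).factorial ≤ b.factorial * (b + d + 1) ^ d :=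
      le_trans ih (Nat.mul_le_mul_left _ (Nat.pow_le_pow_left (by omega) d))
    calc (b + (d + 1)).factorial = (b + d + 1) * (b + d).factorial := by
          rw [show b + (d + 1) = (b + d) + 1 by omega, Nat.factorial_succ]
      _ ≤ (b + d + 1) * (b.factorial * (b + d + 1) ^ d) := Nat.mul_le_mul_left _ h1
      _ = b.factorial * (b + (d + 1)) ^ (d + 1) := by
          rw [show b + (d + 1) = b + d + 1 by omega, pow_succ]; ring

/-- Key inequality: `a! * a^b ≤ b! * a^a`. -/
lemma fact_pow_le (a b : ℕ) : a.factorial * a ^ b ≤ b.factorial * a ^ a := by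
  rcases le_total a b with h | h
  · have h1 : a.factorial * a ^ (b - a) ≤ b.factorial :=
      Nat.factorial_mul_pow_sub_le_factorial h
    calc a.factorial * a ^ b = (a.factorial * a ^ (b - a)) * a ^ a := by
          rw [mul_assoc, ← pow_add]; congr 2; omega
      _ ≤ b.factorial * a ^ a := Nat.mul_le_mul_right _ h1
  · have h1 : a.factorial ≤ b.factorial * a ^ (a - b) := by
      have := factorial_le_mul_pow b (a - b)
      rwa [show b + (a - b) = a by omega] at this
    calc a.factorial * a ^ b ≤ (b.factorial * a ^ (a - b)) * a ^ b :=
          Nat.mul_le_mul_right _ h1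
      _ = b.factorial * a ^ a := by rw [mul_assoc, ← pow_add]; congr 2; omega

end Aux

/-- For any type `Q` of length-`n` sequences over `X`, the probability under `Qⁿ`
of the type class of `Q` is at least `(n+1)^{−(|X|−1)}`. -/
theorem prob_type_class_ge
    {X : Type*} [Fintype X] [DecidableEq X] (n : ℕ) (hn : 0 < n)
    (Q : X → ℝ)
    (hQ : ∃ x0 : Fin n → X, ∀ a, Q a = empType x0 a) :
    (((n : ℝ) + 1) ^ (Fintype.card X - 1))⁻¹ ≤
      ∑ x ∈ Finset.univ.filter (fun x : Fin n → X => ∀ a, empType x a = Q a),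
        ∏ i, Q (x i) := by
  classical
  obtain ⟨x0, hx0⟩ := hQ
  set k : X → ℕ := fun a => cnt x0 a with hk
  have hnR : (0 : ℝ) < n := by exact_mod_cast hn
  have hQk : ∀ a, Q a = (k a : ℝ) / n := fun a => hx0 a
  have hQnonneg : ∀ a, 0 ≤ Q a := fun a => by
    rw [hQk a]; positivity
  have hsumk : ∑ a, k a = n := sum_cnt x0
  -- the type-class finset of a count vector m
  set S : (X → ℕ) → Finset (Fin n → X) :=
    fun m => Finset.univ.filter (fun x => ∀ a, cnt x a = m a) with hS
  -- the goal's filter equals S k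
  have hfilter : Finset.univ.filter (fun x : Fin n → X => ∀ a, empType x a = Q a) = S k := by
    apply Finset.filter_congr
    intro x _
    constructor
    · intro h a
      have := h a
      rw [hQk a] at this
      have h2 : ((cnt x a : ℝ)) / n = (k a : ℝ) / n := this
      have h3 : (cnt x a : ℝ) = (k a : ℝ) := by
        field_simp at h2; exact_mod_cast h2
      exact_mod_cast h3
    · intro h a
      rw [hQk a]
      show ((cnt x a : ℝ)) / n = (k a : ℝ) / n
      rw [h a]
  -- value of the product on a sequence of type m
  have hprod : ∀ (m : X → ℕ) (x : Fin n → X), (∀ a, cnt x a = m a) →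
      ∏ i, Q (x i) = ∏ a, Q a ^ m a := by
    intro m x hx
    rw [← Finset.prod_fiberwise_of_maps_to (g := x) (t := Finset.univ)
      (fun i _ => Finset.mem_univ _) (fun i => Q (x i))]
    refine Finset.prod_congr rfl fun a _ => ?_
    rw [Finset.prod_congr rfl (fun i hi => by rw [(Finset.mem_filter.mp hi).2]),
      Finset.prod_const]
    rw [← hx a]; rfl
  -- sum over each type class
  have hsumS : ∀ m : X → ℕ, ∑ x ∈ S m, ∏ i, Q (x i) = (S m).card * ∏ a, Q a ^ m a := by
    intro m
    rw [Finset.sum_congr rfl (fun x hx => hprod m x (Finset.mem_filter.mp hx).2),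
      Finset.sum_const, nsmul_eq_mul]
  -- the total sum is 1
  have hQsum : ∑ a, Q a = 1 := by
    have : ∑ a, Q a = (∑ a, (k a : ℝ)) / n := by
      rw [Finset.sum_div]; exact Finset.sum_congr rfl fun a _ => hQk a
    rw [this]
    rw [show (∑ a, (k a : ℝ)) = ((∑ a, k a : ℕ) : ℝ) by push_cast; rfl, hsumk]
    field_simp
  have htotal : ∑ m ∈ Finset.piAntidiag Finset.univ n,
      ∑ x ∈ S m, ∏ i, Q (x i) = 1 := by
    have hmaps : ∀ x ∈ (Finset.univ : Finset (Fin n → X)),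
        cnt x ∈ Finset.piAntidiag Finset.univ n := by
      intro x _
      rw [Finset.mem_piAntidiag]
      exact ⟨sum_cnt x, fun a _ => Finset.mem_univ a⟩
    have h := Finset.sum_fiberwise_of_maps_to hmaps (fun x => ∏ i, Q (x i))
    have h2 : ∀ m : X → ℕ, Finset.univ.filter (fun x : Fin n → X => cnt x = m) = S m := by
      intro m
      apply Finset.filter_congr
      intro x _
      exact funext_iff
    calc ∑ m ∈ Finset.piAntidiag Finset.univ n, ∑ x ∈ S m, ∏ i, Q (x i)
        = ∑ m ∈ Finset.piAntidiag Finset.univ n,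
            ∑ x ∈ Finset.univ.filter (fun x : Fin n → X => cnt x = m), ∏ i, Q (x i) := by
          exact Finset.sum_congr rfl fun m _ => by rw [h2 m]
      _ = ∑ x : Fin n → X, ∏ i, Q (x i) := h
      _ = (∑ a, Q a) ^ n := (Fintype.sum_pow Q n).symm
      _ = 1 := by rw [hQsum]; exact one_pow n
  -- key: each type-class term is at most the term for k (in ℕ first)
  have hkeyNat : ∀ m : X → ℕ, ∑ a, m a = n →
      (S m).card * ∏ a, k a ^ m a ≤ (S k).card * ∏ a, k a ^ k a := by
    intro m hm
    -- upper bound for (S m).card * ∏ (m a)!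
    have hup : (S m).card * ∏ a, (m a).factorial ≤ n.factorial := by
      rcases Finset.eq_empty_or_nonempty (S m) with he | ⟨x1, hx1⟩
      · rw [he]
        simp only [Finset.card_empty, Nat.zero_mul]
        exact Nat.zero_le _
      · have hx1' : ∀ a, cnt x1 a = m a := (Finset.mem_filter.mp hx1).2
        have : S m = S (cnt x1) := by
          apply Finset.filter_congr
          intro x _
          constructor
          · intro h a; rw [h a, ← hx1' a]
          · intro h a; rw [h a, hx1' a]
        rw [this, Finset.prod_congr rfl (fun a _ => by rw [← hx1' a])]
        exact le_of_eq (card_typeclass x1)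
    have hlow : n.factorial = (S k).card * ∏ a, (k a).factorial := (card_typeclass x0).symm
    -- multiply both sides by ∏ (m a)! * ∏ (k a)!
    have hpos : 0 < (∏ a, (m a).factorial) * ∏ a, (k a).factorial := by
      apply Nat.mul_pos <;> exact Finset.prod_pos fun a _ => Nat.factorial_pos _
    apply Nat.le_of_mul_le_mul_right _ hpos
    calc (S m).card * (∏ a, k a ^ m a) * ((∏ a, (m a).factorial) * ∏ a, (k a).factorial)
        = ((S m).card * ∏ a, (m a).factorial) * ∏ a, ((k a).factorial * k a ^ m a) := by
          rw [Finset.prod_mul_distrib]; ring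
      _ ≤ n.factorial * ∏ a, ((k a).factorial * k a ^ m a) :=
          Nat.mul_le_mul_right _ hup
      _ ≤ n.factorial * ∏ a, ((m a).factorial * k a ^ k a) := by
          apply Nat.mul_le_mul_left
          exact Finset.prod_le_prod' fun a _ => fact_pow_le (k a) (m a)
      _ = (S k).card * (∏ a, k a ^ k a) * ((∏ a, (m a).factorial) * ∏ a, (k a).factorial) := by
          rw [hlow, Finset.prod_mul_distrib]; ring
  -- transfer to ℝ
  have hQpow : ∀ m : X → ℕ, ∑ a, m a = n →
      ∏ a, Q a ^ m a = ((∏ a, k a ^ m a : ℕ) : ℝ) / (n : ℝ) ^ n := by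
    intro m hm
    calc ∏ a, Q a ^ m a = ∏ a, ((k a : ℝ) ^ m a / (n : ℝ) ^ m a) :=
          Finset.prod_congr rfl fun a _ => by rw [hQk a, div_pow]
      _ = (∏ a, (k a : ℝ) ^ m a) / ∏ a, (n : ℝ) ^ m a := Finset.prod_div_distrib _ _
      _ = ((∏ a, k a ^ m a : ℕ) : ℝ) / (n : ℝ) ^ n := by
          rw [Finset.prod_pow_eq_pow_sum, hm]
          norm_cast
  set T : ℝ := (S k).card * ∏ a, Q a ^ k a with hT
  have hkey : ∀ m ∈ Finset.piAntidiag (Finset.univ : Finset X) n,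
      ∑ x ∈ S m, ∏ i, Q (x i) ≤ T := by
    intro m hm
    obtain ⟨hm1, -⟩ := Finset.mem_piAntidiag.mp hm
    rw [hsumS m, hQpow m hm1, hT, hQpow k hsumk]
    have hcast : (((S m).card * ∏ a, k a ^ m a : ℕ) : ℝ)
        ≤ (((S k).card * ∏ a, k a ^ k a : ℕ) : ℝ) := by
      exact_mod_cast hkeyNat m hm1
    calc ((S m).card : ℝ) * (((∏ a, k a ^ m a : ℕ) : ℝ) / (n : ℝ) ^ n)
        = (((S m).card * ∏ a, k a ^ m a : ℕ) : ℝ) / (n : ℝ) ^ n := by push_cast; ring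
      _ ≤ (((S k).card * ∏ a, k a ^ k a : ℕ) : ℝ) / (n : ℝ) ^ n := by
          have hpow : (0:ℝ) < (n : ℝ) ^ n := pow_pos hnR n
          gcongr
      _ = ((S k).card : ℝ) * (((∏ a, k a ^ k a : ℕ) : ℝ) / (n : ℝ) ^ n) := by push_cast; ring
  have hTnonneg : 0 ≤ T := by
    rw [hT]
    exact mul_nonneg (Nat.cast_nonneg _)
      (Finset.prod_nonneg fun a _ => pow_nonneg (hQnonneg a) _)
  -- bound on the number of types
  set a0 : X := x0 ⟨0, hn⟩ with ha0
  have hinj : (Finset.piAntidiag (Finset.univ : Finset X) n).card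
      ≤ (n + 1) ^ (Fintype.card X - 1) := by
    have hle : ∀ m ∈ Finset.piAntidiag (Finset.univ : Finset X) n, ∀ a, m a ≤ n := by
      intro m hm a
      obtain ⟨h1, -⟩ := Finset.mem_piAntidiag.mp hm
      rw [← h1]
      exact Finset.single_le_sum (fun _ _ => Nat.zero_le _) (Finset.mem_univ a)
    have hcardim : ((Finset.univ : Finset ({a : X // a ≠ a0} → Fin (n + 1)))).card
        = (n + 1) ^ (Fintype.card X - 1) := by
      rw [Finset.card_univ, Fintype.card_fun, Fintype.card_fin]
      congr 1
      rw [Fintype.card_subtype_compl, Fintype.card_subtype_eq]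
    rw [← hcardim]
    apply Finset.card_le_card_of_injOn
      (f := fun (m : X → ℕ) (b : {a : X // a ≠ a0}) => (⟨min (m b.1) n, by omega⟩ : Fin (n + 1)))
      (fun m _ => Finset.mem_univ _)
    intro m1 h1 m2 h2 heq
    have hab : ∀ b : X, b ≠ a0 → m1 b = m2 b := by
      intro b hb
      have h' := congrArg Fin.val (congrFun heq ⟨b, hb⟩)
      simp only at h'
      have e1 := hle m1 h1 b
      have e2 := hle m2 h2 b
      omega
    funext a
    by_cases ha : a = a0
    · subst ha
      obtain ⟨hs1, -⟩ := Finset.mem_piAntidiag.mp h1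
      obtain ⟨hs2, -⟩ := Finset.mem_piAntidiag.mp h2
      have e1 := Finset.add_sum_erase Finset.univ m1 (Finset.mem_univ a0)
      have e2 := Finset.add_sum_erase Finset.univ m2 (Finset.mem_univ a0)
      have e3 : ∑ b ∈ Finset.univ.erase a0, m1 b = ∑ b ∈ Finset.univ.erase a0, m2 b :=
        Finset.sum_congr rfl fun b hb => hab b (Finset.ne_of_mem_erase hb)
      rw [hs1] at e1
      rw [hs2] at e2
      omega
    · exact hab a ha
  have hcardR : ((Finset.piAntidiag (Finset.univ : Finset X) n).card : ℝ)
      ≤ ((n : ℝ) + 1) ^ (Fintype.card X - 1) := by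
    calc ((Finset.piAntidiag (Finset.univ : Finset X) n).card : ℝ)
        ≤ (((n + 1) ^ (Fintype.card X - 1) : ℕ) : ℝ) := by exact_mod_cast hinj
      _ = ((n : ℝ) + 1) ^ (Fintype.card X - 1) := by push_cast; ring
  have h1 : (1 : ℝ) ≤ ((Finset.piAntidiag (Finset.univ : Finset X) n).card : ℝ) * T := by
    rw [← htotal]
    calc ∑ m ∈ Finset.piAntidiag (Finset.univ : Finset X) n, ∑ x ∈ S m, ∏ i, Q (x i)
        ≤ ∑ _m ∈ Finset.piAntidiag (Finset.univ : Finset X) n, T := Finset.sum_le_sum hkey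
      _ = ((Finset.piAntidiag (Finset.univ : Finset X) n).card : ℝ) * T := by
          rw [Finset.sum_const, nsmul_eq_mul]
  have hM : (0 : ℝ) < ((n : ℝ) + 1) ^ (Fintype.card X - 1) := by positivity
  have h2 : (1 : ℝ) ≤ ((n : ℝ) + 1) ^ (Fintype.card X - 1) * T :=
    le_trans h1 (mul_le_mul_of_nonneg_right hcardR hTnonneg)
  have hgoal : (((n : ℝ) + 1) ^ (Fintype.card X - 1))⁻¹ ≤ T := by
    calc (((n : ℝ) + 1) ^ (Fintype.card X - 1))⁻¹
        = (((n : ℝ) + 1) ^ (Fintype.card X - 1))⁻¹ * 1 := (mul_one _).symm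
      _ ≤ (((n : ℝ) + 1) ^ (Fintype.card X - 1))⁻¹
            * (((n : ℝ) + 1) ^ (Fintype.card X - 1) * T) :=
          mul_le_mul_of_nonneg_left h2 (by positivity)
      _ = T := by
          rw [← mul_assoc, inv_mul_cancel₀ (ne_of_gt hM), one_mul]
  rw [hfilter, hsumS k]
  exact hgoal
end

section
/- Let ρ_{ABC} ∈ P(H_A ⊗ H_B ⊗ H_C) and σ_C ∈ P(H_C). Then H_min(ρ_{ABC}|σ_C) ≥ H_min(ρ_{BC}|σ_C) − log rank(ρ_A), where ρ_{BC} = Tr_A ρ_{ABC} and ρ_A = Tr_{BC} ρ_{ABC}. In particular, H_min(ρ_{ABC}|σ_C) ≥ H_min(ρ_{BC}|σ_C) − H_max(ρ_A). -/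
open scoped Classical ComplexOrder
open Kronecker

/-- The min-entropy of `ρ` relative to the conditioning operator `E` (to be taken as
`id_A ⊗ σ_B`): `H_min(ρ|σ) = −log λ` where `λ = min{λ : λ·E − ρ ≥ 0}`, and `−∞` if
no such `λ` exists. -/
noncomputable def HminRel {n : Type*} [Fintype n] [DecidableEq n]
    (ρ E : Matrix n n ℂ) : EReal :=
  if {l : ℝ | (l • E - ρ).PosSemidef}.Nonempty then
    ((-Real.logb 2 (sInf {l : ℝ | (l • E - ρ).PosSemidef}) : ℝ) : EReal)
  else ⊥

namespace HminAux

open Matrix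

set_option linter.unusedSectionVars false
set_option maxHeartbeats 1000000

section LiftSection

variable {a β : Type*} [Fintype a] [DecidableEq a] [Fintype β] [DecidableEq β]

/-- lift a matrix on `β` to `a × β`, as `id_a ⊗ M`. -/
noncomputable def liftA (a : Type*) (M : Matrix β β ℂ) : Matrix (a × β) (a × β) ℂ :=
  Matrix.of fun p q => if p.1 = q.1 then M p.2 q.2 else 0

lemma liftA_isHermitian {M : Matrix β β ℂ} (hM : M.IsHermitian) :
    (liftA a M).IsHermitian := by
  ext p q
  simp only [conjTranspose_apply, liftA, of_apply]
  by_cases h : p.1 = q.1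
  · simp only [if_pos h, if_pos h.symm]
    exact hM.apply p.2 q.2
  · simp only [if_neg h, if_neg (fun hh : q.1 = p.1 => h hh.symm), star_zero]

lemma liftA_mulVec (M : Matrix β β ℂ) (x : a × β → ℂ) (i : a) (j : β) :
    (liftA a M *ᵥ x) (i, j) = ∑ j', M j j' * x (i, j') := by
  simp only [mulVec, dotProduct, liftA, of_apply, Fintype.sum_prod_type, ite_mul, zero_mul]
  rw [Finset.sum_comm]
  simp [Finset.sum_ite_eq]

lemma dot_liftA (M : Matrix β β ℂ) (x : a × β → ℂ) :
    dotProduct (star x) (liftA a M *ᵥ x)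
      = ∑ i : a, dotProduct (star fun j => x (i, j)) (M *ᵥ fun j => x (i, j)) := by
  simp only [dotProduct, Pi.star_apply, Fintype.sum_prod_type]
  refine Finset.sum_congr rfl fun i _ => Finset.sum_congr rfl fun j _ => ?_
  congr 1
  rw [liftA_mulVec]
  simp [mulVec, dotProduct]

lemma liftA_posSemidef {M : Matrix β β ℂ} (hM : M.PosSemidef) :
    (liftA a M).PosSemidef :=
  Matrix.PosSemidef.of_dotProduct_mulVec_nonneg (liftA_isHermitian hM.1) fun x => by
    rw [dot_liftA]; exact Finset.sum_nonneg fun i _ => hM.dotProduct_mulVec_nonneg _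

lemma smul_posSemidef {n : Type*} [Fintype n] {M : Matrix n n ℂ} (hM : M.PosSemidef)
    {r : ℝ} (hr : 0 ≤ r) : (r • M).PosSemidef := by
  refine Matrix.PosSemidef.of_dotProduct_mulVec_nonneg ?_ fun x => ?_
  · have h : (r • M)ᴴ = star r • Mᴴ := Matrix.conjTranspose_smul r M
    rw [Matrix.IsHermitian, h, star_trivial, hM.1.eq]
  · rw [Matrix.smul_mulVec, dotProduct_smul]
    have h := hM.dotProduct_mulVec_nonneg x
    rw [Complex.nonneg_iff] at h ⊢
    rw [Complex.real_smul]
    constructor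
    · rw [Complex.mul_re]
      simp only [Complex.ofReal_re, Complex.ofReal_im, zero_mul, sub_zero]
      exact mul_nonneg hr h.1
    · rw [Complex.mul_im]
      simp [← h.2]

lemma quad_single {n : Type*} [Fintype n] [DecidableEq n] (M : Matrix n n ℂ) (q : n) :
    dotProduct (star (Pi.single q 1 : n → ℂ)) (M *ᵥ (Pi.single q 1)) = M q q := by
  simp [dotProduct, Matrix.mulVec, Pi.single_apply, apply_ite, mul_ite, ite_mul,
    Finset.sum_ite_eq, Finset.sum_ite_eq']





end LiftSection

/-- Cauchy–Schwarz for traces: if `P * M = M` then `|tr M|² ≤ ‖P‖_F² ‖M‖_F²`. -/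
lemma normSq_trace_le {n : Type*} [Fintype n] (P M : Matrix n n ℂ) (hPM : P * M = M)
    (r : ℝ) (hP : ∑ p : n × n, Complex.normSq (P p.1 p.2) = r) :
    Complex.normSq M.trace ≤ r * ∑ p : n × n, Complex.normSq (M p.1 p.2) := by
  classical
  set u : EuclideanSpace ℂ (n × n) := WithLp.toLp 2 (fun p : n × n => star (P p.2 p.1)) with hu
  set w : EuclideanSpace ℂ (n × n) := WithLp.toLp 2 (fun p : n × n => M p.1 p.2) with hw
  have hinner : (inner ℂ u w : ℂ) = M.trace := by
    simp only [PiLp.inner_apply, RCLike.inner_apply, hu, hw, PiLp.toLp_apply, starRingEnd_apply, star_star]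
    conv_rhs => rw [← hPM]
    simp only [Matrix.trace, Matrix.diag, Matrix.mul_apply, Fintype.sum_prod_type]
    rw [Finset.sum_comm]
    exact Finset.sum_congr rfl fun i _ => Finset.sum_congr rfl fun j _ => mul_comm _ _
  have hcs := norm_inner_le_norm (𝕜 := ℂ) u w
  have hsq := mul_self_le_mul_self (norm_nonneg _) hcs
  rw [hinner] at hsq
  have hnu : ‖u‖ * ‖u‖ = r := by
    rw [← hP, EuclideanSpace.norm_eq, Real.mul_self_sqrt (by positivity)]
    rw [show (∑ p : n × n, ‖u p‖ ^ 2) = ∑ p : n × n, Complex.normSq (P p.2 p.1) from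
      Finset.sum_congr rfl fun p _ => by simp [hu, Complex.sq_norm]]
    exact Fintype.sum_equiv (Equiv.prodComm n n) _ _ (fun p => rfl)
  have hnw : ‖w‖ * ‖w‖ = ∑ p : n × n, Complex.normSq (M p.1 p.2) := by
    rw [EuclideanSpace.norm_eq, Real.mul_self_sqrt (by positivity)]
    exact Finset.sum_congr rfl fun p _ => by
      simp [hw, Complex.sq_norm]
  calc Complex.normSq M.trace = ‖M.trace‖ * ‖M.trace‖ := by
        rw [Complex.normSq_eq_norm_sq, sq]
    _ ≤ (‖u‖ * ‖w‖) * (‖u‖ * ‖w‖) := hsq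
    _ = (‖u‖ * ‖u‖) * (‖w‖ * ‖w‖) := by ring
    _ = r * ∑ p : n × n, Complex.normSq (M p.1 p.2) := by rw [hnu, hnw]





/-- A Hermitian projection onto the range of a Hermitian matrix, with Frobenius
norm squared equal to the rank. -/
lemma exists_proj {n : Type*} [Fintype n] [DecidableEq n] {A : Matrix n n ℂ}
    (hA : A.IsHermitian) :
    ∃ P : Matrix n n ℂ, P.IsHermitian ∧ P * A = A ∧
      (∑ p : n × n, Complex.normSq (P p.1 p.2)) = (A.rank : ℝ) := by
  set U : Matrix n n ℂ := (hA.eigenvectorUnitary : Matrix n n ℂ) with hU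
  have hUU : star U * U = 1 := mem_unitaryGroup_iff'.mp hA.eigenvectorUnitary.2
  set d : n → ℂ := fun i => if hA.eigenvalues i = 0 then 0 else 1 with hd
  set P : Matrix n n ℂ := U * Matrix.diagonal d * star U with hP
  have hdd : Matrix.diagonal d * Matrix.diagonal d = Matrix.diagonal d := by
    rw [Matrix.diagonal_mul_diagonal]
    have : (fun i => d i * d i) = d := by
      funext i; by_cases h : hA.eigenvalues i = 0 <;> simp [hd, h]
    rw [this]
  have hPP : P * P = P := by
    rw [hP]
    calc U * Matrix.diagonal d * star U * (U * Matrix.diagonal d * star U)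
        = U * Matrix.diagonal d * (star U * U) * Matrix.diagonal d * star U := by
          simp only [Matrix.mul_assoc]
      _ = U * Matrix.diagonal d * star U := by
          rw [hUU, Matrix.mul_one, Matrix.mul_assoc U, hdd]
  have hPH : P.IsHermitian := by
    have hdH : (Matrix.diagonal d)ᴴ = Matrix.diagonal d := by
      rw [Matrix.diagonal_conjTranspose]
      have : (star d) = d := by
        funext i; by_cases h : hA.eigenvalues i = 0 <;> simp [hd, h]
      rw [this]
    rw [hP, Matrix.IsHermitian]
    rw [Matrix.conjTranspose_mul, Matrix.conjTranspose_mul, hdH, Matrix.star_eq_conjTranspose,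
      Matrix.conjTranspose_conjTranspose, Matrix.mul_assoc]
  set G : Matrix n n ℂ := Matrix.diagonal (RCLike.ofReal ∘ hA.eigenvalues) with hG
  have hspec : A = U * G * star U := by
    have h := hA.spectral_theorem; rwa [Unitary.conjStarAlgAut_apply] at h
  refine ⟨P, hPH, ?_, ?_⟩
  · have halg : P * (U * G * star U) = U * G * star U := by
      calc P * (U * G * star U)
          = U * (Matrix.diagonal d * (star U * U) * G) * star U := by
            rw [hP]; simp only [Matrix.mul_assoc]
        _ = U * G * star U := by
            rw [hUU, Matrix.mul_one, hG, Matrix.diagonal_mul_diagonal]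
            have : (fun i => d i * (RCLike.ofReal ∘ hA.eigenvalues) i)
                = RCLike.ofReal ∘ hA.eigenvalues := by
              funext i
              by_cases h : hA.eigenvalues i = 0 <;> simp [hd, h, Function.comp]
            rw [this]
    calc P * A = P * (U * G * star U) := by rw [← hspec]
      _ = U * G * star U := halg
      _ = A := hspec.symm
  · -- ∑ normSq of entries of P equals trace (P * Pᴴ) = trace P = rank
    have h1 : ((∑ p : n × n, Complex.normSq (P p.1 p.2) : ℝ) : ℂ) = (P * Pᴴ).trace := by
      rw [Matrix.trace]
      push_cast
      rw [Fintype.sum_prod_type]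
      refine Finset.sum_congr rfl fun i _ => ?_
      rw [Matrix.diag_apply, Matrix.mul_apply]
      refine Finset.sum_congr rfl fun j _ => ?_
      rw [Matrix.conjTranspose_apply, ← Complex.mul_conj]
      rfl
    have h2 : P * Pᴴ = P := by rw [hPH.eq, hPP]
    have h3 : P.trace = (A.rank : ℂ) := by
      rw [hP, Matrix.trace_mul_cycle, hUU, Matrix.one_mul,
        Matrix.trace_diagonal, hA.rank_eq_card_non_zero_eigs]
      rw [Fintype.card_subtype]
      rw [Finset.card_eq_sum_ones]
      push_cast
      rw [Finset.sum_filter]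
      refine Finset.sum_congr rfl fun i _ => ?_
      by_cases h : hA.eigenvalues i = 0 <;> simp [hd, h]
    have := h1.trans (by rw [h2, h3])
    exact_mod_cast this




lemma proj_fix {n m : Type*} [Fintype n] [Fintype m] [DecidableEq n]
    {P A : Matrix n n ℂ} {T : Matrix n m ℂ}
    (hPH : P.IsHermitian) (hPA : P * A = A) (hT : T * Tᴴ = A) : P * T = T := by
  have hAH : A.IsHermitian := by
    rw [← hT, Matrix.IsHermitian, Matrix.conjTranspose_mul, Matrix.conjTranspose_conjTranspose]
  have hAP : A * P = A := by
    have h := congrArg Matrix.conjTranspose hPA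
    rwa [Matrix.conjTranspose_mul, hPH.eq, hAH.eq] at h
  have e1 : T * (Tᴴ * P) = A := by rw [← Matrix.mul_assoc, hT, hAP]
  have e2 : P * T * Tᴴ = A := by rw [Matrix.mul_assoc, hT, hPA]
  have e3 : P * T * (Tᴴ * P) = A := by
    rw [Matrix.mul_assoc, ← Matrix.mul_assoc T, hT, hAP, hPA]
  have hzero : (T - P * T) * (T - P * T)ᴴ = 0 := by
    rw [Matrix.conjTranspose_sub, Matrix.conjTranspose_mul, hPH.eq, Matrix.sub_mul,
      Matrix.mul_sub, Matrix.mul_sub, hT, e1, e2, e3]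
    simp
  have hN : T - P * T = 0 := Matrix.self_mul_conjTranspose_eq_zero.mp hzero
  have := sub_eq_zero.mp hN
  exact this.symm

open scoped MatrixOrder in
lemma exists_herm_sqrt {n : Type*} [Fintype n] [DecidableEq n] {ρ : Matrix n n ℂ}
    (hρ : ρ.PosSemidef) : ∃ S : Matrix n n ℂ, S.IsHermitian ∧ S * S = ρ :=
  ⟨CFC.sqrt ρ, (Matrix.nonneg_iff_posSemidef.mp (CFC.sqrt_nonneg ρ)).1,
    CFC.sqrt_mul_sqrt_self ρ (Matrix.nonneg_iff_posSemidef.mpr hρ)⟩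

/-- a nonzero PSD matrix has a diagonal entry with positive real part -/
lemma exists_diag_pos {n : Type*} [Fintype n] [DecidableEq n] {E : Matrix n n ℂ}
    (hE : E.PosSemidef) (hne : E ≠ 0) : ∃ q : n, 0 < (E q q).re := by
  by_contra h
  push_neg at h
  apply hne
  obtain ⟨S, hSH, hS⟩ := exists_herm_sqrt hE
  have hdiag : ∀ q, (E q q).re = ∑ k, Complex.normSq (S q k) := by
    intro q
    conv_lhs => rw [← hS]
    rw [show S * S = S * (S)ᴴ from by rw [hSH.eq]]
    rw [Matrix.mul_apply, Complex.re_sum]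
    refine Finset.sum_congr rfl fun k _ => ?_
    simp only [Matrix.conjTranspose_apply]
    rw [show (star (S q k)) = (starRingEnd ℂ) (S q k) from rfl, Complex.mul_conj]
    simp
  have hS0 : S = 0 := by
    ext q k
    have h1 := h q
    rw [hdiag q] at h1
    have h2 : ∑ k, Complex.normSq (S q k) = 0 := le_antisymm h1
      (Finset.sum_nonneg fun k _ => Complex.normSq_nonneg _)
    have h3 := (Finset.sum_eq_zero_iff_of_nonneg
      (fun k _ => Complex.normSq_nonneg (S q k))).mp h2 k (Finset.mem_univ k)
    simpa using Complex.normSq_eq_zero.mp h3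
  rw [← hS, hS0, Matrix.mul_zero]

lemma exists_vec_pos {n : Type*} [Fintype n] [DecidableEq n] {E : Matrix n n ℂ}
    (hE : E.PosSemidef) (hne : E ≠ 0) :
    ∃ x : n → ℂ, 0 < (dotProduct (star x) (E *ᵥ x)).re := by
  obtain ⟨q, hq⟩ := exists_diag_pos hE hne
  refine ⟨Pi.single q 1, ?_⟩
  have : dotProduct (star (Pi.single q 1 : n → ℂ)) (E *ᵥ (Pi.single q 1)) = E q q := by
    simp [dotProduct, Matrix.mulVec, Pi.single_apply, apply_ite, mul_ite, ite_mul,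
      Finset.sum_ite_eq, Finset.sum_ite_eq']
  rw [this]
  exact hq





lemma quad_conj {n m : Type*} [Fintype n] [Fintype m] (C : Matrix m n ℂ) (y : n → ℂ) :
    dotProduct (star y) ((Cᴴ * C) *ᵥ y)
      = ((∑ k, Complex.normSq ((C *ᵥ y) k) : ℝ) : ℂ) := by
  rw [← Matrix.mulVec_mulVec, dotProduct_mulVec, ← Matrix.star_mulVec]
  push_cast
  simp only [dotProduct, Pi.star_apply]
  refine Finset.sum_congr rfl fun k _ => ?_
  rw [mul_comm, Complex.star_def, Complex.mul_conj]

theorem key {a β : Type*} [Fintype a] [DecidableEq a] [Fintype β] [DecidableEq β]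
    (ρ : Matrix (a × β) (a × β) ℂ) (hρ : ρ.PosSemidef) :
    ((((Matrix.of fun i i' : a => ∑ j, ρ (i, j) (i', j)).rank : ℝ)) •
        liftA a (Matrix.of fun j j' : β => ∑ i, ρ (i, j) (i, j')) - ρ).PosSemidef := by
  classical
  set ρA : Matrix a a ℂ := Matrix.of fun i i' => ∑ j, ρ (i, j) (i', j) with hρA
  set ρB : Matrix β β ℂ := Matrix.of fun j j' => ∑ i, ρ (i, j) (i, j') with hρB
  set r : ℝ := (ρA.rank : ℝ) with hr
  have hr0 : (0 : ℝ) ≤ r := Nat.cast_nonneg _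
  obtain ⟨S, hSH, hSS⟩ := exists_herm_sqrt hρ
  have hρf : ρ = Sᴴ * S := by rw [hSH.eq, hSS]
  -- Hermiticity of ρA and ρB
  have hAH : ρA.IsHermitian := by
    rw [Matrix.IsHermitian]; ext i i'
    rw [Matrix.conjTranspose_apply, hρA]
    simp only [Matrix.of_apply, star_sum]
    exact Finset.sum_congr rfl fun j _ => hρ.1.apply (i, j) (i', j)
  have hBH : ρB.IsHermitian := by
    rw [Matrix.IsHermitian]; ext j j'
    rw [Matrix.conjTranspose_apply, hρB]
    simp only [Matrix.of_apply, star_sum]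
    exact Finset.sum_congr rfl fun i _ => hρ.1.apply (i, j) (i, j')
  obtain ⟨P, hPH, hPA, hPsum⟩ := exists_proj hAH
  set T : Matrix a (β × (a × β)) ℂ := Matrix.of fun i jk => S (i, jk.1) jk.2 with hT
  have hentry : ∀ p q, ρ p q = ∑ k, S p k * star (S q k) := by
    intro p q
    conv_lhs => rw [← hSS]
    rw [Matrix.mul_apply]
    refine Finset.sum_congr rfl fun k _ => ?_
    rw [← hSH.apply k q]
  have hTT : T * Tᴴ = ρA := by
    ext i i'
    rw [Matrix.mul_apply, hρA]
    simp only [Matrix.of_apply]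
    rw [Fintype.sum_prod_type]
    refine Finset.sum_congr rfl fun j _ => ?_
    rw [hentry (i, j) (i', j)]
    exact Finset.sum_congr rfl fun k _ => rfl
  have hPT : P * T = T := proj_fix hPH hPA hTT
  set V : (a × β) → Matrix a β ℂ := fun k => Matrix.of fun i j => S (i, j) k with hV
  have hPV : ∀ k, P * V k = V k := by
    intro k
    ext i j
    have h := congrArg (fun N : Matrix a (β × (a × β)) ℂ => N i (j, k)) hPT
    simpa [Matrix.mul_apply, hT, hV] using h
  rw [Matrix.posSemidef_iff_dotProduct_mulVec]
  constructor
  · have h1 : (liftA a ρB).IsHermitian := liftA_isHermitian hBH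
    have h2 : (r • liftA a ρB).IsHermitian := by
      have h := Matrix.conjTranspose_smul r (liftA a ρB)
      rw [Matrix.IsHermitian, h, star_trivial, h1.eq]
    exact h2.sub hρ.1
  · intro x
    set X : Matrix a β ℂ := Matrix.of fun i j => x (i, j) with hX
    set Mk : (a × β) → Matrix a a ℂ := fun k => V k * Xᴴ with hMk
    have hPMk : ∀ k, P * Mk k = Mk k := fun k => by rw [hMk, ← Matrix.mul_assoc, hPV]
    have hMkapp : ∀ k i'' i, (Mk k) i'' i = ∑ j, S (i'', j) k * star (x (i, j)) := by
      intro k i'' i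
      simp [hMk, Matrix.mul_apply, hV, hX, Matrix.conjTranspose_apply]
    -- e1
    have htr : ∀ k, (S *ᵥ x) k = star ((Mk k).trace) := by
      intro k
      have h1 : (Mk k).trace = ∑ i, ∑ j, S (i, j) k * star (x (i, j)) := by
        rw [Matrix.trace]
        exact Finset.sum_congr rfl fun i _ => hMkapp k i i
      rw [h1]
      simp only [star_sum, star_mul', star_star]
      have h2 : (S *ᵥ x) k = ∑ p, S k p * x p := by
        simp [Matrix.mulVec, dotProduct]
      rw [h2, Fintype.sum_prod_type]
      refine Finset.sum_congr rfl fun i _ => Finset.sum_congr rfl fun j _ => ?_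
      rw [← hSH.apply k (i, j), mul_comm]
    have e1 : dotProduct (star x) (ρ *ᵥ x)
        = ((∑ k, Complex.normSq ((Mk k).trace) : ℝ) : ℂ) := by
      conv_lhs => rw [hρf]
      rw [quad_conj]
      norm_cast
      refine Finset.sum_congr rfl fun k _ => ?_
      rw [htr k, Complex.star_def, Complex.normSq_conj]
    -- e2
    set W : Matrix (a × (a × β)) β ℂ := Matrix.of fun q j => S q.2 (q.1, j) with hW
    have hρBf : ρB = Wᴴ * W := by
      ext j j'
      rw [Matrix.mul_apply, hρB]
      simp only [Matrix.of_apply]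
      rw [Fintype.sum_prod_type]
      refine Finset.sum_congr rfl fun i _ => ?_
      rw [show ρ (i, j) (i, j') = ∑ k, star (S k (i, j)) * S k (i, j') from by
        rw [hρf, Matrix.mul_apply]
        exact Finset.sum_congr rfl fun k _ => rfl]
      exact Finset.sum_congr rfl fun k _ => rfl
    have hpt : ∀ i i'' k, (W *ᵥ fun j => x (i, j)) (i'', k) = star ((Mk k) i'' i) := by
      intro i i'' k
      have h2 : (W *ᵥ fun j => x (i, j)) (i'', k) = ∑ j, S k (i'', j) * x (i, j) := by
        simp [Matrix.mulVec, dotProduct, hW]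
      rw [h2, hMkapp k i'' i]
      simp only [star_sum, star_mul', star_star]
      refine Finset.sum_congr rfl fun j _ => ?_
      rw [← hSH.apply k (i'', j), mul_comm]
    have e2 : dotProduct (star x) (liftA a ρB *ᵥ x)
        = ((∑ k, ∑ p : a × a, Complex.normSq ((Mk k) p.1 p.2) : ℝ) : ℂ) := by
      rw [dot_liftA]
      have h3 : ∀ i : a, dotProduct (star fun j => x (i, j)) (ρB *ᵥ fun j => x (i, j))
          = ((∑ q : a × (a × β), Complex.normSq ((W *ᵥ fun j => x (i, j)) q) : ℝ) : ℂ) := by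
        intro i
        conv_lhs => rw [hρBf]
        rw [quad_conj]
      rw [show (∑ i : a, dotProduct (star fun j => x (i, j)) (ρB *ᵥ fun j => x (i, j)))
          = ∑ i : a, ((∑ q : a × (a × β), Complex.normSq ((W *ᵥ fun j => x (i, j)) q) : ℝ) : ℂ)
        from Finset.sum_congr rfl fun i _ => h3 i]
      norm_cast
      -- reorganize sums
      calc ∑ i : a, ∑ q : a × (a × β), Complex.normSq ((W *ᵥ fun j => x (i, j)) q)
          = ∑ i : a, ∑ i'' : a, ∑ k : a × β, Complex.normSq ((Mk k) i'' i) := by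
            refine Finset.sum_congr rfl fun i _ => ?_
            rw [Fintype.sum_prod_type]
            refine Finset.sum_congr rfl fun i'' _ => Finset.sum_congr rfl fun k _ => ?_
            rw [hpt i i'' k, Complex.star_def, Complex.normSq_conj]
        _ = ∑ i'' : a, ∑ i : a, ∑ k : a × β, Complex.normSq ((Mk k) i'' i) :=
            Finset.sum_comm
        _ = ∑ i'' : a, ∑ k : a × β, ∑ i : a, Complex.normSq ((Mk k) i'' i) :=
            Finset.sum_congr rfl fun i'' _ => Finset.sum_comm
        _ = ∑ k : a × β, ∑ i'' : a, ∑ i : a, Complex.normSq ((Mk k) i'' i) :=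
            Finset.sum_comm
        _ = ∑ k : a × β, ∑ p : a × a, Complex.normSq ((Mk k) p.1 p.2) :=
            Finset.sum_congr rfl fun k _ =>
              (Fintype.sum_prod_type (fun p : a × a => Complex.normSq ((Mk k) p.1 p.2))).symm
    -- conclude
    have hle : ∀ k, Complex.normSq ((Mk k).trace)
        ≤ r * ∑ p : a × a, Complex.normSq ((Mk k) p.1 p.2) :=
      fun k => normSq_trace_le P (Mk k) (hPMk k) r hPsum
    rw [Matrix.sub_mulVec, dotProduct_sub, Matrix.smul_mulVec,
      dotProduct_smul, e1, e2]
    rw [Complex.real_smul, ← Complex.ofReal_mul, ← Complex.ofReal_sub,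
      Complex.zero_le_real, sub_nonneg]
    calc (∑ k, Complex.normSq ((Mk k).trace))
        ≤ ∑ k, r * ∑ p : a × a, Complex.normSq ((Mk k) p.1 p.2) :=
          Finset.sum_le_sum fun k _ => hle k
      _ = r * ∑ k, ∑ p : a × a, Complex.normSq ((Mk k) p.1 p.2) := by
          rw [Finset.mul_sum]

lemma diag_re_nonneg {n : Type*} [Fintype n] [DecidableEq n] {M : Matrix n n ℂ}
    (hM : M.PosSemidef) (q : n) : 0 ≤ (M q q).re := by
  have h := (Complex.nonneg_iff.mp (hM.dotProduct_mulVec_nonneg (Pi.single q 1))).1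
  rwa [quad_single] at h

lemma quad_sub_single {n : Type*} [Fintype n] [DecidableEq n] (E Rho : Matrix n n ℂ) (l : ℝ)
    (q : n) (h : ((l : ℝ) • E - Rho).PosSemidef) : 0 ≤ l * (E q q).re - (Rho q q).re := by
  have h2 := (Complex.nonneg_iff.mp (h.dotProduct_mulVec_nonneg (Pi.single q 1))).1
  rw [Matrix.sub_mulVec, dotProduct_sub, Matrix.smul_mulVec,
    dotProduct_smul, quad_single, quad_single] at h2
  simpa [Complex.sub_re, Complex.real_smul, Complex.mul_re] using h2

lemma liftA_sub {a β : Type*} [Fintype a] [DecidableEq a] [Fintype β] [DecidableEq β]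
    (M N : Matrix β β ℂ) : liftA a (M - N) = liftA a M - liftA a N := by
  ext p q
  by_cases h : p.1 = q.1 <;> simp [liftA, h]

lemma liftA_smul {a β : Type*} [Fintype a] [DecidableEq a] [Fintype β] [DecidableEq β]
    (t : ℝ) (M : Matrix β β ℂ) : liftA a (t • M) = t • liftA a M := by
  ext p q
  by_cases h : p.1 = q.1 <;> simp [liftA, h]

lemma rank_ne_zero {n : Type*} [Fintype n] [DecidableEq n] {A : Matrix n n ℂ}
    (hA : A.IsHermitian) (h : A ≠ 0) : A.rank ≠ 0 := by
  intro h0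
  apply h
  rw [hA.rank_eq_card_non_zero_eigs] at h0
  have hall : ∀ i, hA.eigenvalues i = 0 := by
    intro i; by_contra hi
    have : 0 < Fintype.card {i // hA.eigenvalues i ≠ 0} := Fintype.card_pos_iff.mpr ⟨⟨i, hi⟩⟩
    omega
  rw [hA.spectral_theorem]
  have hd : Matrix.diagonal (RCLike.ofReal ∘ hA.eigenvalues) = (0 : Matrix n n ℂ) := by
    ext i j
    by_cases hij : i = j <;> simp [Matrix.diagonal_apply, hij, hall]
  rw [hd, map_zero]

lemma sInf_scaling_zero {n : Type*} [Fintype n] [DecidableEq n] {E : Matrix n n ℂ}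
    (hE : E.PosSemidef) : sInf {l : ℝ | ((l : ℝ) • E).PosSemidef} = 0 := by
  by_cases hne : E = 0
  · have hset : {l : ℝ | ((l : ℝ) • E).PosSemidef} = Set.univ := by
      apply Set.eq_univ_iff_forall.mpr
      intro l
      simp [hne, Matrix.PosSemidef.zero]
    rw [hset]
    apply Real.sInf_of_not_bddBelow
    rintro ⟨x, hx⟩
    have h1 := hx (Set.mem_univ (x - 1))
    linarith
  · have hset : {l : ℝ | ((l : ℝ) • E).PosSemidef} = Set.Ici 0 := by
      ext l
      constructor
      · intro hl
        by_contra hneg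
        rw [Set.mem_Ici, not_le] at *
        obtain ⟨q, hq⟩ := exists_diag_pos hE hne
        have h2 := (Complex.nonneg_iff.mp (hl.dotProduct_mulVec_nonneg (Pi.single q 1))).1
        rw [Matrix.smul_mulVec, dotProduct_smul, quad_single] at h2
        have : (l • E q q).re = l * (E q q).re := by
          simp [Complex.real_smul, Complex.mul_re]
        rw [this] at h2
        nlinarith
      · intro hl
        exact smul_posSemidef hE hl
    rw [hset, csInf_Ici]

lemma hminrel_zero {n : Type*} [Fintype n] [DecidableEq n] {E : Matrix n n ℂ}
    (hE : E.PosSemidef) : HminRel 0 E = 0 := by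
  rw [HminRel]
  simp only [sub_zero]
  rw [if_pos ⟨0, by simpa using Matrix.PosSemidef.zero⟩, sInf_scaling_zero hE,
    Real.logb_zero, neg_zero]
  rfl


end HminAux

open HminAux in
/-- `H_min(ρ_{ABC}|σ_C) ≥ H_min(ρ_{BC}|σ_C) − log rank(ρ_A) = H_min(ρ_{BC}|σ_C) − H_max(ρ_A)`. -/
theorem hmin_chain_rank
    {a b c : Type*} [Fintype a] [DecidableEq a] [Fintype b] [DecidableEq b]
    [Fintype c] [DecidableEq c]
    (ρABC : Matrix (a × b × c) (a × b × c) ℂ) (hρ : ρABC.PosSemidef)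
    (σC : Matrix c c ℂ) (hσ : σC.PosSemidef) :
    HminRel ρABC
        (Matrix.of fun p q : a × b × c =>
          if p.1 = q.1 ∧ p.2.1 = q.2.1 then σC p.2.2 q.2.2 else 0) ≥
      HminRel (Matrix.of fun p q : b × c => ∑ i, ρABC (i, p.1, p.2) (i, q.1, q.2))
          ((1 : Matrix b b ℂ) ⊗ₖ σC) -
        ((Real.logb 2
          ((Matrix.of fun i i' : a => ∑ j, ∑ k, ρABC (i, j, k) (i', j, k)).rank) : ℝ) :
          EReal) := by
  classical
  set ρBC : Matrix (b × c) (b × c) ℂ :=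
    Matrix.of fun p q : b × c => ∑ i, ρABC (i, p.1, p.2) (i, q.1, q.2) with hρBC
  set ρA : Matrix a a ℂ :=
    Matrix.of fun i i' : a => ∑ j, ∑ k, ρABC (i, j, k) (i', j, k) with hρA
  set E2 : Matrix (b × c) (b × c) ℂ := (1 : Matrix b b ℂ) ⊗ₖ σC with hE2
  set E1 : Matrix (a × b × c) (a × b × c) ℂ :=
    Matrix.of (fun p q : a × b × c =>
      if p.1 = q.1 ∧ p.2.1 = q.2.1 then σC p.2.2 q.2.2 else 0) with hE1
  have hE2lift : E2 = liftA b σC := by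
    ext ⟨j, k⟩ ⟨j', k'⟩
    by_cases h : j = j' <;>
      simp [hE2, liftA, Matrix.one_apply, h]
  have hE1lift : E1 = liftA a E2 := by
    ext ⟨i, j, k⟩ ⟨i', j', k'⟩
    by_cases h1 : i = i' <;> by_cases h2 : j = j' <;>
      simp [hE1, hE2, liftA, Matrix.one_apply, h1, h2]
  have hρBCkey : ρBC = Matrix.of fun j j' : b × c => ∑ i, ρABC (i, j) (i, j') := by
    ext ⟨j, k⟩ ⟨j', k'⟩
    rfl
  have hρAkey : ρA = Matrix.of fun i i' : a => ∑ p : b × c, ρABC (i, p) (i', p) := by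
    ext i i'
    simp only [hρA, Matrix.of_apply]
    exact (Fintype.sum_prod_type (fun p : b × c => ρABC (i, p) (i', p))).symm
  set r : ℝ := (ρA.rank : ℝ) with hrdef
  have hr0 : (0 : ℝ) ≤ r := Nat.cast_nonneg _
  have hAH : ρA.IsHermitian := by
    rw [Matrix.IsHermitian]
    ext i i'
    rw [Matrix.conjTranspose_apply, hρAkey]
    simp only [Matrix.of_apply, star_sum]
    exact Finset.sum_congr rfl fun p _ => hρ.1.apply (i, p) (i', p)
  have hkey : (r • liftA a ρBC - ρABC).PosSemidef := by
    have h := key (a := a) (β := b × c) ρABC hρ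
    rw [show (Matrix.of fun i i' : a => ∑ j : b × c, ρABC (i, j) (i', j)) = ρA
        from hρAkey.symm,
      show (Matrix.of fun j j' : b × c => ∑ i, ρABC (i, j) (i, j')) = ρBC
        from hρBCkey.symm] at h
    exact h
  have hE2psd : E2.PosSemidef := by rw [hE2lift]; exact liftA_posSemidef hσ
  have hE1psd : E1.PosSemidef := by
    rw [hE1lift, hE2lift]
    exact liftA_posSemidef (liftA_posSemidef hσ)
  have hmap : ∀ l : ℝ, ((l : ℝ) • E2 - ρBC).PosSemidef →
      ((r * l : ℝ) • E1 - ρABC).PosSemidef := by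
    intro l hl
    have h1 : (r * l : ℝ) • E1 - ρABC
        = r • (liftA a ((l : ℝ) • E2 - ρBC)) + (r • liftA a ρBC - ρABC) := by
      rw [liftA_sub, liftA_smul, ← hE1lift, smul_sub, smul_smul]
      abel
    rw [h1]
    exact (smul_posSemidef (liftA_posSemidef hl) hr0).add hkey
  by_cases hz : ρABC = 0
  · have hBC0 : ρBC = 0 := by
      ext p q
      simp [hρBC, hz]
    have hA0 : ρA = 0 := by
      ext i i'
      simp [hρA, hz]
    have hr00 : r = 0 := by rw [hrdef, hA0, Matrix.rank_zero]; norm_num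
    rw [hz, hBC0, hminrel_zero hE1psd, hminrel_zero hE2psd, hr00, Real.logb_zero]
    norm_num
  · obtain ⟨q0, hq0⟩ := exists_diag_pos hρ hz
    obtain ⟨i0, p0⟩ := q0
    have hdiagnn : ∀ q, 0 ≤ (ρABC q q).re := diag_re_nonneg hρ
    have hc2 : 0 < (ρBC p0 p0).re := by
      rw [show ρBC p0 p0 = ∑ i, ρABC (i, p0) (i, p0) from by rw [hρBCkey]; rfl,
        Complex.re_sum]
      exact lt_of_lt_of_le hq0 (Finset.single_le_sum
        (f := fun i => (ρABC (i, p0) (i, p0)).re)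
        (fun i _ => hdiagnn _) (Finset.mem_univ i0))
    have hAne : ρA ≠ 0 := by
      intro h0
      have : (ρA i0 i0).re = 0 := by rw [h0]; simp
      have h1 : 0 < (ρA i0 i0).re := by
        rw [show ρA i0 i0 = ∑ p : b × c, ρABC (i0, p) (i0, p) from by rw [hρAkey]; rfl,
          Complex.re_sum]
        exact lt_of_lt_of_le hq0 (Finset.single_le_sum
          (f := fun p => (ρABC (i0, p) (i0, p)).re)
          (fun p _ => hdiagnn _) (Finset.mem_univ p0))
      linarith
    have hr1 : (1 : ℝ) ≤ r := by
      rw [hrdef]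
      exact_mod_cast Nat.one_le_iff_ne_zero.mpr (rank_ne_zero hAH hAne)
    have hrpos : (0 : ℝ) < r := lt_of_lt_of_le one_pos hr1
    set S1 : Set ℝ := {l : ℝ | (l • E1 - ρABC).PosSemidef} with hS1def
    set S2 : Set ℝ := {l : ℝ | (l • E2 - ρBC).PosSemidef} with hS2def
    by_cases hS2 : S2.Nonempty
    · obtain ⟨l0, hl0⟩ := hS2
      have hS1 : S1.Nonempty := ⟨r * l0, hmap l0 hl0⟩
      rw [ge_iff_le, HminRel, HminRel, if_pos hS1, if_pos ⟨l0, hl0⟩]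
      -- positivity of sInf S2
      have hd2nn : 0 ≤ (E2 p0 p0).re := diag_re_nonneg hE2psd p0
      have hd2pos : 0 < (E2 p0 p0).re := by
        rcases hd2nn.lt_or_eq with h | h
        · exact h
        · exfalso
          have := quad_sub_single E2 ρBC l0 p0 hl0
          rw [← h] at this
          nlinarith
      have hlb2 : ∀ l ∈ S2, (ρBC p0 p0).re / (E2 p0 p0).re ≤ l := by
        intro l hl
        have := quad_sub_single E2 ρBC l p0 hl
        rw [div_le_iff₀ hd2pos]
        linarith
      have hm2pos : 0 < sInf S2 :=
        lt_of_lt_of_le (div_pos hc2 hd2pos) (le_csInf ⟨l0, hl0⟩ hlb2)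
      -- positivity of sInf S1
      have hd1nn : 0 ≤ (E1 (i0, p0) (i0, p0)).re := diag_re_nonneg hE1psd _
      have hd1pos : 0 < (E1 (i0, p0) (i0, p0)).re := by
        rcases hd1nn.lt_or_eq with h | h
        · exact h
        · exfalso
          have := quad_sub_single E1 ρABC (r * l0) (i0, p0) (hmap l0 hl0)
          rw [← h] at this
          nlinarith
      have hlb1 : ∀ l ∈ S1, (ρABC (i0, p0) (i0, p0)).re / (E1 (i0, p0) (i0, p0)).re ≤ l := by
        intro l hl
        have := quad_sub_single E1 ρABC l (i0, p0) hl
        rw [div_le_iff₀ hd1pos]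
        linarith
      have hm1pos : 0 < sInf S1 :=
        lt_of_lt_of_le (div_pos hq0 hd1pos) (le_csInf hS1 hlb1)
      have hbdd1 : BddBelow S1 := ⟨_, hlb1⟩
      have hle : sInf S1 ≤ sInf S2 * r := by
        have h1 : ∀ l ∈ S2, sInf S1 / r ≤ l := by
          intro l hl
          rw [div_le_iff₀ hrpos]
          have := csInf_le hbdd1 (hmap l hl)
          linarith [this]
        have h2 : sInf S1 / r ≤ sInf S2 := le_csInf ⟨l0, hl0⟩ h1
        rw [div_le_iff₀ hrpos] at h2
        exact h2
      have hlog : Real.logb 2 (sInf S1) ≤ Real.logb 2 r + Real.logb 2 (sInf S2) := by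
        calc Real.logb 2 (sInf S1) ≤ Real.logb 2 (sInf S2 * r) :=
              Real.logb_le_logb_of_le (by norm_num) hm1pos hle
          _ = Real.logb 2 (sInf S2) + Real.logb 2 r :=
              Real.logb_mul (ne_of_gt hm2pos) (ne_of_gt hrpos)
          _ = Real.logb 2 r + Real.logb 2 (sInf S2) := by ring
      rw [show ((-Real.logb 2 (sInf S2) : ℝ) : EReal) - ((Real.logb 2 r : ℝ) : EReal)
          = ((-Real.logb 2 (sInf S2) - Real.logb 2 r : ℝ) : EReal) from (EReal.coe_sub _ _).symm]
      rw [EReal.coe_le_coe_iff]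
      linarith
    · rw [ge_iff_le, HminRel, if_neg hS2, EReal.bot_sub]
      exact bot_le
end

section
/- Let ρ_{XBC} ∈ P(H_X ⊗ H_B ⊗ H_C) be classical on H_X, i.e., ρ_{XBC} = Σ_x P_X(x) |x⟩⟨x| ⊗ ρ_{BC}^x for an orthonormal basis {|x⟩}. Then for any σ_C ∈ P(H_C), H_min(ρ_{XBC}|σ_C) ≥ H_min(ρ_{BC}|σ_C), where ρ_{BC} = Tr_X ρ_{XBC}. -/
open scoped Classical ComplexOrder
open Kronecker Matrix

section Aux

set_option linter.unusedSectionVars false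

variable {X n : Type*} [Fintype X] [DecidableEq X] [Fintype n] [DecidableEq n]

/-- Block-diagonal matrix indexed by a classical register. -/
noncomputable def blockD (M : X → Matrix n n ℂ) : Matrix (X × n) (X × n) ℂ :=
  Matrix.of fun p q => if p.1 = q.1 then M p.1 p.2 q.2 else 0

lemma blockD_hermitian {M : X → Matrix n n ℂ} (h : ∀ x, (M x).IsHermitian) :
    (blockD M).IsHermitian := by
  ext ⟨x, p⟩ ⟨y, q⟩
  simp only [blockD, Matrix.conjTranspose_apply, Matrix.of_apply]
  by_cases hxy : x = y
  · subst hxy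
    simp [(h x).apply]
  · simp [hxy, Ne.symm hxy]

lemma blockD_qf (M : X → Matrix n n ℂ) (v : X × n → ℂ) :
    star v ⬝ᵥ (blockD M) *ᵥ v
      = ∑ x, star (fun p => v (x, p)) ⬝ᵥ (M x) *ᵥ (fun p => v (x, p)) := by
  simp only [dotProduct, Matrix.mulVec, blockD, Matrix.of_apply, Pi.star_apply]
  rw [Fintype.sum_prod_type]
  refine Finset.sum_congr rfl fun x _ => ?_
  refine Finset.sum_congr rfl fun p _ => ?_
  congr 1
  rw [Fintype.sum_prod_type]
  rw [Finset.sum_eq_single x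
      (fun y _ hy => Finset.sum_eq_zero fun q _ => by
        rw [if_neg (Ne.symm hy : ¬ ((x, p).1 = (y, q).1)), zero_mul])
      (fun h => absurd (Finset.mem_univ x) h)]
  simp

lemma blockD_psd {M : X → Matrix n n ℂ} (h : ∀ x, (M x).PosSemidef) :
    (blockD M).PosSemidef := by
  refine Matrix.PosSemidef.of_dotProduct_mulVec_nonneg (blockD_hermitian fun x => (h x).1) fun v => ?_
  rw [blockD_qf]
  exact Finset.sum_nonneg fun x _ => (h x).dotProduct_mulVec_nonneg _

lemma qf_single (M : Matrix n n ℂ) (d : n) :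
    star (Pi.single d 1 : n → ℂ) ⬝ᵥ M *ᵥ (Pi.single d 1) = M d d := by
  simp [dotProduct, Matrix.mulVec, Pi.single_apply, apply_ite, mul_ite, ite_mul,
    Finset.mul_sum]

lemma psd_diag_nonneg {M : Matrix n n ℂ} (h : M.PosSemidef) (d : n) : 0 ≤ M d d := by
  have := h.dotProduct_mulVec_nonneg (Pi.single d 1)
  rwa [qf_single] at this

lemma psd_csmul {M : Matrix n n ℂ} (h : M.PosSemidef) {t : ℝ} (ht : 0 ≤ t) :
    ((t : ℂ) • M).PosSemidef := by
  refine Matrix.PosSemidef.of_dotProduct_mulVec_nonneg ?_ ?_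
  · unfold Matrix.IsHermitian
    rw [Matrix.conjTranspose_smul, h.1.eq]
    norm_num
  · intro v
    rw [Matrix.smul_mulVec, dotProduct_smul]
    exact smul_nonneg (by exact_mod_cast Complex.zero_le_real.2 ht) (h.dotProduct_mulVec_nonneg v)

lemma exists_diag_pos {σ : Matrix n n ℂ} (h : σ.PosSemidef) (h0 : σ ≠ 0) :
    ∃ i, 0 < (σ i i).re := by
  by_contra h'
  push_neg at h'
  apply h0
  obtain ⟨B, hB⟩ : ∃ B : Matrix n n ℂ, σ = Bᴴ * B := by
    open MatrixOrder in
    obtain ⟨X, hX, -, rfl⟩ := CFC.exists_sqrt_of_isSelfAdjoint_of_quasispectrumRestricts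
      h.isHermitian (QuasispectrumRestricts.nnreal_of_nonneg h.nonneg)
    exact ⟨X, by rw [← Matrix.star_eq_conjTranspose, hX.star_eq]⟩
  have hBz : B = 0 := by
    ext k i
    have hd0 : σ i i = 0 := by
      have h1 := psd_diag_nonneg h i
      rw [Complex.le_def] at h1
      exact Complex.ext (le_antisymm (h' i) h1.1) h1.2.symm
    have h2 : dotProduct (star fun k => B k i) (fun k => B k i) = 0 := by
      rw [← hd0, hB]
      simp [Matrix.mul_apply, Matrix.conjTranspose_apply, dotProduct]
    exact congrFun (dotProduct_star_self_eq_zero.mp h2) k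
  rw [hB, hBz]
  simp

lemma psd_of_isEmpty [IsEmpty n] (M : Matrix n n ℂ) : M.PosSemidef := by
  refine Matrix.PosSemidef.of_dotProduct_mulVec_nonneg ?_ ?_
  · ext i j
    exact isEmptyElim i
  · intro v
    simp [dotProduct]

lemma rsmul_eq_csmul (l : ℝ) (M : Matrix n n ℂ) : l • M = (l : ℂ) • M := by
  ext i j
  simp [Complex.real_smul]

lemma qf_sum {ι : Type*} (s : Finset ι) (M : ι → Matrix n n ℂ) (v : n → ℂ) :
    star v ⬝ᵥ (∑ i ∈ s, M i) *ᵥ v = ∑ i ∈ s, star v ⬝ᵥ (M i) *ᵥ v := by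
  classical
  induction s using Finset.induction with
  | empty => simp
  | insert _ _ h ih =>
      rw [Finset.sum_insert h, Finset.sum_insert h, Matrix.add_mulVec, dotProduct_add, ih]

lemma sInf_mem_S {E ρ : Matrix n n ℂ} (hE : E.PosSemidef)
    (hne : {l : ℝ | (l • E - ρ).PosSemidef}.Nonempty)
    (hbd : BddBelow {l : ℝ | (l • E - ρ).PosSemidef}) :
    ((sInf {l : ℝ | (l • E - ρ).PosSemidef}) • E - ρ).PosSemidef := by
  set S := {l : ℝ | (l • E - ρ).PosSemidef} with hS
  set a := sInf S with ha
  obtain ⟨l0, hl0⟩ := hne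
  have hl0' : (l0 • E - ρ).PosSemidef := hl0
  have hherm : ∀ l : ℝ, (l • E - ρ).IsHermitian := by
    intro l
    have h1 : l • E - ρ = (l - l0) • E + (l0 • E - ρ) := by rw [sub_smul]; abel
    rw [h1]
    refine Matrix.IsHermitian.add ?_ hl0'.1
    unfold Matrix.IsHermitian
    rw [Matrix.conjTranspose_smul, star_trivial, hE.1.eq]
  refine Matrix.PosSemidef.of_dotProduct_mulVec_nonneg (hherm a) fun v => ?_
  have hqf : ∀ l : ℝ, star v ⬝ᵥ (l • E - ρ) *ᵥ v
      = (l : ℂ) * (star v ⬝ᵥ E *ᵥ v) - star v ⬝ᵥ ρ *ᵥ v := by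
    intro l
    rw [Matrix.sub_mulVec, dotProduct_sub, rsmul_eq_csmul, Matrix.smul_mulVec,
      dotProduct_smul, smul_eq_mul]
  have he := hE.dotProduct_mulVec_nonneg v
  set e := star v ⬝ᵥ E *ᵥ v with hedef
  set r := star v ⬝ᵥ ρ *ᵥ v with hrdef
  rw [Complex.le_def] at he
  have heim : e.im = 0 := he.2.symm
  have here : 0 ≤ e.re := by simpa using he.1
  have key : ∀ l ∈ S, 0 ≤ l * e.re - r.re := by
    intro l hl
    have h2 : (0 : ℂ) ≤ (l : ℂ) * e - r := by rw [← hqf l]; exact hl.dotProduct_mulVec_nonneg v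
    rw [Complex.le_def] at h2
    have := h2.1
    simpa [Complex.sub_re, Complex.mul_re, heim] using this
  have hrim : r.im = 0 := by
    have h2 : (0 : ℂ) ≤ (l0 : ℂ) * e - r := by rw [← hqf l0]; exact hl0'.dotProduct_mulVec_nonneg v
    rw [Complex.le_def] at h2
    have := h2.2
    simp [Complex.sub_im, Complex.mul_im, heim] at this
    linarith
  have hre : 0 ≤ a * e.re - r.re := by
    by_contra hcon
    push_neg at hcon
    rcases here.eq_or_lt with he0 | hepos
    · have h1 := key l0 hl0
      rw [← he0] at h1 hcon
      simp at h1 hcon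
      linarith
    · set ε := (r.re - a * e.re) / e.re with hεdef
      have hεpos : 0 < ε := div_pos (by linarith) hepos
      obtain ⟨l, hlS, hlt⟩ := exists_lt_of_csInf_lt ⟨l0, hl0⟩
        (show sInf S < a + ε by rw [← ha]; linarith)
      have h1 := key l hlS
      have hcancel : ε * e.re = r.re - a * e.re := div_mul_cancel₀ _ (ne_of_gt hepos)
      nlinarith [mul_lt_mul_of_pos_right hlt hepos]
  rw [hqf a, Complex.le_def]
  constructor
  · simpa [Complex.sub_re, Complex.mul_re, heim] using hre
  · simp [Complex.sub_im, Complex.mul_im, heim, hrim]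

theorem aux_main {X b c : Type*} [Fintype X] [DecidableEq X] [Fintype b] [DecidableEq b]
    [Fintype c] [DecidableEq c]
    (P : X → ℝ) (hP0 : ∀ x, 0 ≤ P x) (hP1 : ∑ x, P x = 1)
    (ρx : X → Matrix (b × c) (b × c) ℂ) (hρx : ∀ x, (ρx x).PosSemidef)
    (σC : Matrix c c ℂ) (hσ : σC.PosSemidef) :
    HminRel (blockD fun x => (P x : ℂ) • ρx x) (blockD fun _ : X => blockD fun _ : b => σC) ≥
      HminRel (∑ x, (P x : ℂ) • ρx x) (blockD fun _ : b => σC) := by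
  classical
  set EB : Matrix (b × c) (b × c) ℂ := blockD fun _ : b => σC with hEB
  set ρB : Matrix (b × c) (b × c) ℂ := ∑ x, (P x : ℂ) • ρx x with hρB
  set EX : Matrix (X × (b × c)) (X × (b × c)) ℂ := blockD fun _ : X => EB with hEX
  set ρX : Matrix (X × (b × c)) (X × (b × c)) ℂ := blockD fun x => (P x : ℂ) • ρx x with hρX
  have hEBpsd : EB.PosSemidef := blockD_psd fun _ => hσ
  have hEXpsd : EX.PosSemidef := blockD_psd fun _ => hEBpsd
  have hρBpsd : ρB.PosSemidef := by
    rw [hρB]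
    refine Finset.sum_induction _ _ (fun a b ha hb => ha.add hb) Matrix.PosSemidef.zero ?_
    exact fun x _ => psd_csmul (hρx x) (hP0 x)
  have hblock : ∀ l : ℝ, l • EX - ρX = blockD fun x => l • EB - (P x : ℂ) • ρx x := by
    intro l
    ext ⟨x, p⟩ ⟨y, q⟩
    by_cases hxy : x = y
    · subst hxy
      simp [hEX, hρX, blockD]
    · simp [hEX, hρX, blockD, hxy]
  have hblockpsd : ∀ l : ℝ, (l • EB - ρB).PosSemidef →
      ∀ x, (l • EB - (P x : ℂ) • ρx x).PosSemidef := by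
    intro l hl x
    have hdecomp : l • EB - (P x : ℂ) • ρx x
        = (l • EB - ρB) + ∑ y ∈ Finset.univ.erase x, (P y : ℂ) • ρx y := by
      rw [hρB, ← Finset.add_sum_erase _ _ (Finset.mem_univ x)]
      abel
    rw [hdecomp]
    refine hl.add ?_
    refine Finset.sum_induction _ _ (fun a b ha hb => ha.add hb) Matrix.PosSemidef.zero ?_
    exact fun y _ => psd_csmul (hρx y) (hP0 y)
  rw [ge_iff_le]
  unfold HminRel
  set S1 := {l : ℝ | (l • EB - ρB).PosSemidef} with hS1
  set S2 := {l : ℝ | (l • EX - ρX).PosSemidef} with hS2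
  have hsub : S1 ⊆ S2 := by
    intro l hl
    rw [hS2, Set.mem_setOf_eq, hblock l]
    exact blockD_psd (hblockpsd l hl)
  by_cases h1 : S1.Nonempty
  swap
  · rw [if_neg h1]
    exact bot_le
  have h2 : S2.Nonempty := h1.mono hsub
  rw [if_pos h1, if_pos h2]
  refine EReal.coe_le_coe_iff.mpr (neg_le_neg ?_)
  by_cases hdeg : σC = 0 ∨ IsEmpty (b × c)
  · have hS1univ : ∀ l : ℝ, l ∈ S1 := by
      obtain ⟨l0, hl0⟩ := h1
      intro l
      rcases hdeg with h0 | hemp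
      · have hEB0 : EB = 0 := by
          rw [hEB]
          ext ⟨b1, c1⟩ ⟨b2, c2⟩
          simp [blockD, h0]
        have hl0' : (l0 • EB - ρB).PosSemidef := hl0
        rw [hS1, Set.mem_setOf_eq, hEB0]
        rw [hEB0] at hl0'
        simpa using hl0'
      · exact psd_of_isEmpty _
    have hS2univ : ∀ l : ℝ, l ∈ S2 := fun l => hsub (hS1univ l)
    have hSeq : S1 = S2 := Set.eq_of_subset_of_subset hsub (fun l _ => hS1univ l)
    rw [hSeq]
  · push_neg at hdeg
    obtain ⟨hσ0, hbc⟩ := hdeg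
    obtain ⟨b0, -⟩ := id hbc
    obtain ⟨c0, hc0⟩ := exists_diag_pos hσ hσ0
    have hXne : Nonempty X := by
      by_contra h
      rw [not_nonempty_iff] at h
      rw [Fintype.sum_empty] at hP1
      exact one_ne_zero hP1.symm
    obtain ⟨x0⟩ := hXne
    have hlb2 : ∀ l ∈ S2, 0 ≤ l := by
      intro l hl
      have hl' : (l • EX - ρX).PosSemidef := hl
      have hd := psd_diag_nonneg hl' (x0, (b0, c0))
      have hEXdd : EX (x0, (b0, c0)) (x0, (b0, c0)) = σC c0 c0 := by
        simp [hEX, hEB, blockD]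
      have hρXdd : ρX (x0, (b0, c0)) (x0, (b0, c0))
          = (P x0 : ℂ) * ρx x0 (b0, c0) (b0, c0) := by
        simp [hρX, blockD]
      rw [Matrix.sub_apply, Matrix.smul_apply, hEXdd, hρXdd] at hd
      have hq := psd_diag_nonneg (hρx x0) (b0, c0)
      rw [Complex.le_def] at hd hq
      have hd1 : 0 ≤ l * (σC c0 c0).re - P x0 * (ρx x0 (b0, c0) (b0, c0)).re := by
        have := hd.1
        simpa [Complex.real_smul, Complex.sub_re, Complex.mul_re, Complex.ofReal_re,
          Complex.ofReal_im] using this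
      have hq1 : 0 ≤ (ρx x0 (b0, c0) (b0, c0)).re := by simpa using hq.1
      nlinarith [hP0 x0, mul_nonneg (hP0 x0) hq1]
    have hbd2 : BddBelow S2 := ⟨0, fun l hl => hlb2 l hl⟩
    have hbd1 : BddBelow S1 := hbd2.mono hsub
    have ha0 : 0 ≤ sInf S2 := le_csInf h2 fun l hl => hlb2 l hl
    have hab : sInf S2 ≤ sInf S1 := csInf_le_csInf hbd2 h1 hsub
    rcases ha0.eq_or_lt with haz | hapos
    · have hmem : ((sInf S2) • EX - ρX).PosSemidef := sInf_mem_S hEXpsd h2 hbd2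
      rw [← haz] at hmem
      have hmem0 : (blockD fun x => (0 : ℝ) • EB - (P x : ℂ) • ρx x).PosSemidef := by
        rw [← hblock 0]
        exact hmem
      have h0S1 : (0 : ℝ) ∈ S1 := by
        rw [hS1, Set.mem_setOf_eq]
        have hzero : (0 : ℝ) • EB - ρB = -ρB := by simp
        rw [hzero]
        refine Matrix.PosSemidef.of_dotProduct_mulVec_nonneg hρBpsd.1.neg fun w => ?_
        have hv := hmem0.dotProduct_mulVec_nonneg (fun p : X × (b × c) => w p.2)
        rw [blockD_qf] at hv
        have hterm : ∀ x : X,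
            (star (fun p => (fun p : X × (b × c) => w p.2) (x, p))) ⬝ᵥ
              ((0 : ℝ) • EB - (P x : ℂ) • ρx x) *ᵥ (fun p => (fun p : X × (b × c) => w p.2) (x, p))
              = star w ⬝ᵥ (-((P x : ℂ) • ρx x)) *ᵥ w := by
          intro x
          congr 1
          simp
        rw [Finset.sum_congr rfl (fun x _ => hterm x)] at hv
        have hsumneg : ∑ x : X, star w ⬝ᵥ (-((P x : ℂ) • ρx x)) *ᵥ w
            = star w ⬝ᵥ (-ρB) *ᵥ w := by
          rw [hρB, ← qf_sum]
          congr 1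
          rw [← Finset.sum_neg_distrib]
        rw [hsumneg] at hv
        exact hv
      have hb1le : sInf S1 ≤ 0 := csInf_le hbd1 h0S1
      have hb1ge : 0 ≤ sInf S1 := le_csInf h1 fun l hl => hlb2 l (hsub hl)
      rw [le_antisymm hb1le hb1ge, ← haz]
    · exact Real.logb_le_logb_of_le (by norm_num) hapos hab

end Aux

/-- Monotonicity of min-entropy under removing a classical system:
for `ρ_{XBC} = Σ_x P_X(x)|x⟩⟨x| ⊗ ρ_{BC}^x` classical on `X`,
`H_min(ρ_{XBC}|σ_C) ≥ H_min(ρ_{BC}|σ_C)`. -/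
theorem hmin_monotone_remove_classical
    {X b c : Type*} [Fintype X] [DecidableEq X] [Fintype b] [DecidableEq b]
    [Fintype c] [DecidableEq c]
    (P : X → ℝ) (hP0 : ∀ x, 0 ≤ P x) (hP1 : ∑ x, P x = 1)
    (ρx : X → Matrix (b × c) (b × c) ℂ) (hρx : ∀ x, (ρx x).PosSemidef)
    (σC : Matrix c c ℂ) (hσ : σC.PosSemidef) :
    HminRel
        (Matrix.of fun p q : X × b × c =>
          if p.1 = q.1 then (P p.1 : ℂ) * ρx p.1 (p.2.1, p.2.2) (q.2.1, q.2.2) else 0)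
        (Matrix.of fun p q : X × b × c =>
          if p.1 = q.1 ∧ p.2.1 = q.2.1 then σC p.2.2 q.2.2 else 0) ≥
      HminRel (∑ x, (P x : ℂ) • ρx x) ((1 : Matrix b b ℂ) ⊗ₖ σC) := by
  have e1 : (Matrix.of fun p q : X × b × c =>
        if p.1 = q.1 then (P p.1 : ℂ) * ρx p.1 (p.2.1, p.2.2) (q.2.1, q.2.2) else 0)
      = blockD fun x => (P x : ℂ) • ρx x := by
    ext ⟨x, p⟩ ⟨y, q⟩
    simp [blockD]
  have e2 : (Matrix.of fun p q : X × b × c =>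
        if p.1 = q.1 ∧ p.2.1 = q.2.1 then σC p.2.2 q.2.2 else 0)
      = blockD fun _ : X => blockD fun _ : b => σC := by
    ext ⟨x, p⟩ ⟨y, q⟩
    simp [blockD, ite_and]
  have e3 : (1 : Matrix b b ℂ) ⊗ₖ σC = blockD fun _ : b => σC := by
    ext ⟨b1, c1⟩ ⟨b2, c2⟩
    simp [Matrix.kroneckerMap_apply, Matrix.one_apply, blockD, ite_mul]
  rw [e1, e2, e3]
  exact aux_main P hP0 hP1 ρx hρx σC hσ
end

section
/- Let C be a linear subspace of F₂^m with dual code C^⊥, and let P be a probability distribution on F₂^m × F₂^m. For x⃗, s⃗ ∈ F₂^m define the unit vector |φ(x⃗,s⃗)⟩ = (1/√P_S(s⃗)) Σ_{z⃗} (−1)^{x⃗·z⃗} √P(s⃗,z⃗) |s⃗,z⃗⟩, where P_S(s⃗) = Σ_z P(s⃗,z⃗) > 0, and σ^{x⃗,s⃗} = |φ(x⃗,s⃗)⟩⟨φ(x⃗,s⃗)|. Let J be a set of coset representatives of F₂^m/C^⊥ and define P_{J|s⃗}(j⃗) = (Σ_{c⃗∈C^⊥} P(s⃗, j⃗+c⃗))/P_S(s⃗).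 Then for any a⃗ ∈ F₂^m: (1/|C|) Σ_{x⃗∈C} σ^{x⃗+a⃗, s⃗} = Σ_{j⃗∈J} P_{J|s⃗}(j⃗) |θ(a⃗,s⃗,j⃗)⟩⟨θ(a⃗,s⃗,j⃗)|, where |θ(a⃗,s⃗,j⃗)⟩ = (Σ_{e⃗∈C^⊥} P(s⃗,j⃗+e⃗))^{−1/2} Σ_{c⃗∈C^⊥} (−1)^{a⃗·c⃗} √P(s⃗,j⃗+c⃗) |s⃗, j⃗+c⃗⟩. -/
open scoped Classical

/-- `(−1)^{x·y}` for `x, y ∈ F₂^m`, valued in `ℝ`. -/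
noncomputable def sgn {m : ℕ} (x y : Fin m → ZMod 2) : ℝ :=
  if (∑ k, x k * y k : ZMod 2) = 0 then 1 else -1

/-- The dual code `C^⊥ = {y : x·y = 0 for all x ∈ C}`. -/
def dualSet {m : ℕ} (C : Submodule (ZMod 2) (Fin m → ZMod 2)) :
    Set (Fin m → ZMod 2) :=
  {y | ∀ x ∈ C, (∑ k, x k * y k : ZMod 2) = 0}

/-- The rank-one operator `|v⟩⟨v|` for a real vector `v`. -/
def outerProd {ι : Type*} (v : ι → ℝ) : Matrix ι ι ℝ :=
  Matrix.of fun p q => v p * v q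

/-- The unit vector `|φ(x,s)⟩ = P_S(s)^{-1/2} Σ_z (−1)^{x·z} √P(s,z) |s,z⟩`. -/
noncomputable def phiVec {m : ℕ} (P : (Fin m → ZMod 2) × (Fin m → ZMod 2) → ℝ)
    (x s : Fin m → ZMod 2) : (Fin m → ZMod 2) × (Fin m → ZMod 2) → ℝ :=
  fun p => if p.1 = s then
    (Real.sqrt (∑ z, P (s, z)))⁻¹ * sgn x p.2 * Real.sqrt (P (s, p.2)) else 0

/-- The eigenvector `|θ(a,s,j)⟩ = (Σ_{e∈C^⊥} P(s,j+e))^{-1/2}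
Σ_{c∈C^⊥} (−1)^{a·c} √P(s,j+c) |s,j+c⟩`. -/
noncomputable def thetaVec {m : ℕ} (C : Submodule (ZMod 2) (Fin m → ZMod 2))
    (P : (Fin m → ZMod 2) × (Fin m → ZMod 2) → ℝ) (a s j : Fin m → ZMod 2) :
    (Fin m → ZMod 2) × (Fin m → ZMod 2) → ℝ :=
  fun p => (Real.sqrt (∑ e : dualSet C, P (s, j + (e : Fin m → ZMod 2))))⁻¹ *
    ∑ c : dualSet C, sgn a (c : Fin m → ZMod 2) *
      Real.sqrt (P (s, j + (c : Fin m → ZMod 2))) *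
      (if p = (s, j + (c : Fin m → ZMod 2)) then 1 else 0)

lemma sgn_add_left {m : ℕ} (x a y : Fin m → ZMod 2) : sgn (x + a) y = sgn x y * sgn a y := by
  unfold sgn
  have h : (∑ k, (x + a) k * y k : ZMod 2) = (∑ k, x k * y k) + ∑ k, a k * y k := by
    rw [← Finset.sum_add_distrib]; exact Finset.sum_congr rfl fun k _ => by simp [add_mul]
  rw [h]
  generalize (∑ k, x k * y k : ZMod 2) = u
  generalize (∑ k, a k * y k : ZMod 2) = v
  have key : (u + v = 0) ↔ (u = 0 ↔ v = 0) := by revert u v; decide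
  split_ifs <;> simp_all

lemma sgn_add_right {m : ℕ} (x y z : Fin m → ZMod 2) : sgn x (y + z) = sgn x y * sgn x z := by
  unfold sgn
  have h : (∑ k, x k * (y + z) k : ZMod 2) = (∑ k, x k * y k) + ∑ k, x k * z k := by
    rw [← Finset.sum_add_distrib]; exact Finset.sum_congr rfl fun k _ => by simp [mul_add]
  rw [h]
  generalize (∑ k, x k * y k : ZMod 2) = u
  generalize (∑ k, x k * z k : ZMod 2) = v
  have key : (u + v = 0) ↔ (u = 0 ↔ v = 0) := by revert u v; decide
  split_ifs <;> simp_all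

lemma char_sum {m : ℕ} (C : Submodule (ZMod 2) (Fin m → ZMod 2)) (w : Fin m → ZMod 2) :
    ∑ x : C, sgn (x : Fin m → ZMod 2) w =
    if w ∈ dualSet C then (Fintype.card C : ℝ) else 0 := by
  split_ifs with h
  · have h1 : ∀ x : C, sgn (x : Fin m → ZMod 2) w = 1 := fun x => if_pos (h _ x.2)
    rw [Finset.sum_congr rfl fun x _ => h1 x]
    simp
  · obtain ⟨x0, hx0C, hx0⟩ : ∃ x ∈ C, (∑ k, x k * w k : ZMod 2) ≠ 0 := by
      by_contra hcon; push_neg at hcon; exact h hcon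
    have hsgn : sgn x0 w = -1 := if_neg hx0
    have key : ∑ x : C, sgn (x : Fin m → ZMod 2) w
        = ∑ x : C, sgn ((x : Fin m → ZMod 2) + x0) w := by
      exact Fintype.sum_equiv (Equiv.addRight (⟨x0, hx0C⟩ : C))
        (fun x => sgn ((x : Fin m → ZMod 2) + x0) w)
        (fun x => sgn (x : Fin m → ZMod 2) w) (fun x => rfl) |>.symm
    have key2 : ∑ x : C, sgn ((x : Fin m → ZMod 2) + x0) w
        = -∑ x : C, sgn (x : Fin m → ZMod 2) w := by
      rw [← Finset.sum_neg_distrib]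
      exact Finset.sum_congr rfl fun x _ => by rw [sgn_add_left, hsgn]; ring
    linarith [key.trans key2]
lemma dual_add {m : ℕ} {C : Submodule (ZMod 2) (Fin m → ZMod 2)}
    {u v : Fin m → ZMod 2} (hu : u ∈ dualSet C) (hv : v ∈ dualSet C) :
    u + v ∈ dualSet C := by
  intro x hx
  have : (∑ k, x k * (u + v) k : ZMod 2) = (∑ k, x k * u k) + ∑ k, x k * v k := by
    rw [← Finset.sum_add_distrib]; exact Finset.sum_congr rfl fun k _ => by simp [mul_add]
  rw [this, hu x hx, hv x hx, add_zero]

lemma addSelf {m : ℕ} (v : Fin m → ZMod 2) : v + v = 0 :=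
  funext fun k => CharTwo.add_self_eq_zero (v k)

lemma thetaVec_apply {m : ℕ} (C : Submodule (ZMod 2) (Fin m → ZMod 2))
    (P : (Fin m → ZMod 2) × (Fin m → ZMod 2) → ℝ) (a s j : Fin m → ZMod 2)
    (p : (Fin m → ZMod 2) × (Fin m → ZMod 2)) :
    thetaVec C P a s j p =
      if p.1 = s ∧ p.2 - j ∈ dualSet C then
        (Real.sqrt (∑ e : dualSet C, P (s, j + (e : Fin m → ZMod 2))))⁻¹ *
          (sgn a (p.2 - j) * Real.sqrt (P (s, p.2)))
      else 0 := by
  obtain ⟨p1, p2⟩ := p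
  unfold thetaVec
  dsimp only
  by_cases hp1 : p1 = s
  · subst hp1
    have hiff : ∀ c : dualSet C,
        ((p1, p2) = (p1, j + (c : Fin m → ZMod 2))) ↔
          ((c : Fin m → ZMod 2) = p2 - j) := by
      intro c
      rw [Prod.mk.injEq]
      constructor
      · rintro ⟨-, h2⟩; rw [h2]; abel
      · intro h; exact ⟨rfl, by rw [h]; abel⟩
    by_cases hD : p2 - j ∈ dualSet C
    · rw [if_pos ⟨rfl, hD⟩]
      congr 1
      have hc0 : j + ((⟨p2 - j, hD⟩ : dualSet C) : Fin m → ZMod 2) = p2 := by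
        dsimp; abel
      rw [Finset.sum_eq_single (⟨p2 - j, hD⟩ : dualSet C)]
      · rw [if_pos (by rw [hc0]), mul_one, hc0]
      · intro c _ hc
        rw [if_neg (fun h => hc (Subtype.ext ((hiff c).mp h))), mul_zero]
      · intro habs; exact absurd (Finset.mem_univ _) habs
    · rw [if_neg (by simp [hD])]
      have hz : (∑ c : dualSet C, sgn a (c : Fin m → ZMod 2) *
          Real.sqrt (P (p1, j + (c : Fin m → ZMod 2))) *
          (if (p1, p2) = (p1, j + (c : Fin m → ZMod 2)) then 1 else 0)) = 0 :=
        Finset.sum_eq_zero fun c _ => by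
          rw [if_neg (fun h => hD ((hiff c).mp h ▸ c.2)), mul_zero]
      rw [hz, mul_zero]
  · rw [if_neg (by simp [hp1])]
    have hz : (∑ c : dualSet C, sgn a (c : Fin m → ZMod 2) *
        Real.sqrt (P (s, j + (c : Fin m → ZMod 2))) *
        (if (p1, p2) = (s, j + (c : Fin m → ZMod 2)) then 1 else 0)) = 0 :=
      Finset.sum_eq_zero fun c _ => by
        rw [if_neg (fun h => hp1 (congrArg Prod.fst h)), mul_zero]
    rw [hz, mul_zero]
/-- Eigendecomposition of the mixture `(1/|C|) Σ_{x∈C} |φ(x+a,s)⟩⟨φ(x+a,s)|` :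
it equals `Σ_{j∈J} P_{J|s}(j) |θ(a,s,j)⟩⟨θ(a,s,j)|` for a set `J` of coset
representatives of `F₂^m/C^⊥`. -/
theorem mixture_of_eve_states_eigendecomposition
    {m : ℕ} (C : Submodule (ZMod 2) (Fin m → ZMod 2))
    (P : (Fin m → ZMod 2) × (Fin m → ZMod 2) → ℝ)
    (hP0 : ∀ p, 0 ≤ P p) (hP1 : ∑ p, P p = 1)
    (J : Finset (Fin m → ZMod 2))
    (hJ : ∀ y : Fin m → ZMod 2, ∃! j, j ∈ J ∧ y - j ∈ dualSet C)
    (a s : Fin m → ZMod 2) (hs : 0 < ∑ z, P (s, z)) :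
    (Fintype.card C : ℝ)⁻¹ •
        (∑ x : C, outerProd (phiVec P ((x : Fin m → ZMod 2) + a) s)) =
      ∑ j ∈ J,
        ((∑ c : dualSet C, P (s, j + (c : Fin m → ZMod 2))) / (∑ z, P (s, z))) •
          outerProd (thetaVec C P a s j) := by
  ext p q
  simp only [Matrix.smul_apply, Matrix.sum_apply, smul_eq_mul, outerProd, Matrix.of_apply]
  obtain ⟨p1, p2⟩ := p
  obtain ⟨q1, q2⟩ := q
  by_cases hp1 : p1 = s
  swap
  · simp [phiVec, hp1, thetaVec_apply]
  by_cases hq1 : q1 = s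
  swap
  · simp [phiVec, hq1, thetaVec_apply]
  rw [hp1, hq1]
  have hφ : ∀ (x y : Fin m → ZMod 2), phiVec P x s (s, y)
      = (Real.sqrt (∑ z, P (s, z)))⁻¹ * sgn x y * Real.sqrt (P (s, y)) :=
    fun x y => if_pos rfl
  simp only [hφ, thetaVec_apply]
  have hterm : ∀ x : C,
      ((Real.sqrt (∑ z, P (s, z)))⁻¹ * sgn ((x : Fin m → ZMod 2) + a) p2 * Real.sqrt (P (s, p2)))
        * ((Real.sqrt (∑ z, P (s, z)))⁻¹ * sgn ((x : Fin m → ZMod 2) + a) q2 * Real.sqrt (P (s, q2)))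
      = ((Real.sqrt (∑ z, P (s, z)))⁻¹ * (Real.sqrt (∑ z, P (s, z)))⁻¹
          * (Real.sqrt (P (s, p2)) * Real.sqrt (P (s, q2))) * sgn a (p2 + q2))
        * sgn (x : Fin m → ZMod 2) (p2 + q2) := by
    intro x
    have h1 : sgn ((x : Fin m → ZMod 2) + a) p2 * sgn ((x : Fin m → ZMod 2) + a) q2
        = sgn (x : Fin m → ZMod 2) (p2 + q2) * sgn a (p2 + q2) := by
      rw [← sgn_add_right, sgn_add_left]
    calc _ = ((Real.sqrt (∑ z, P (s, z)))⁻¹ * (Real.sqrt (∑ z, P (s, z)))⁻¹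
          * (Real.sqrt (P (s, p2)) * Real.sqrt (P (s, q2))))
          * (sgn ((x : Fin m → ZMod 2) + a) p2 * sgn ((x : Fin m → ZMod 2) + a) q2) := by ring
      _ = _ := by rw [h1]; ring
  rw [Finset.sum_congr rfl fun x _ => hterm x, ← Finset.mul_sum, char_sum]
  obtain ⟨j0, ⟨hj0J, hj0D⟩, huniq⟩ := hJ p2
  rw [Finset.sum_eq_single_of_mem j0 hj0J (fun j hjJ hjne => by
    rw [if_neg (fun h : True ∧ p2 - j ∈ dualSet C =>
      hjne (huniq j ⟨hjJ, h.2⟩)), zero_mul, mul_zero])]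
  rw [if_pos (⟨trivial, hj0D⟩ : True ∧ p2 - j0 ∈ dualSet C)]
  by_cases hw : p2 + q2 ∈ dualSet C
  · have hid1 : (p2 + q2) + (p2 - j0) = q2 - j0 := by
      have h2 := addSelf p2
      calc (p2 + q2) + (p2 - j0) = (q2 - j0) + (p2 + p2) := by abel
        _ = q2 - j0 := by rw [h2, add_zero]
    have hq2D : q2 - j0 ∈ dualSet C := hid1 ▸ dual_add hw hj0D
    have hGG : sgn a (p2 - j0) * sgn a (q2 - j0) = sgn a (p2 + q2) := by
      rw [← sgn_add_right]
      congr 1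
      have h2 := addSelf j0
      calc (p2 - j0) + (q2 - j0) = (p2 + q2) - (j0 + j0) := by abel
        _ = p2 + q2 := by rw [h2, sub_zero]
    rw [if_pos hw, if_pos (⟨trivial, hq2D⟩ : True ∧ q2 - j0 ∈ dualSet C)]
    by_cases hT0 : (∑ c : dualSet C, P (s, j0 + (c : Fin m → ZMod 2))) = 0
    · have h1 : P (s, j0 + ((⟨p2 - j0, hj0D⟩ : dualSet C) : Fin m → ZMod 2)) = 0 :=
        (Finset.sum_eq_zero_iff_of_nonneg (fun c _ => hP0 _)).mp hT0 _ (Finset.mem_univ _)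
      have hp2z : P (s, p2) = 0 := by
        rwa [show j0 + (p2 - j0) = p2 by abel] at h1
      simp [hp2z]
    · have hTpos : (0:ℝ) < ∑ c : dualSet C, P (s, j0 + (c : Fin m → ZMod 2)) :=
        lt_of_le_of_ne (Finset.sum_nonneg fun c _ => hP0 _) (Ne.symm hT0)
      have hcard : (Fintype.card C : ℝ) ≠ 0 := Nat.cast_ne_zero.mpr Fintype.card_ne_zero
      have hAA : (Real.sqrt (∑ z, P (s, z)))⁻¹ * (Real.sqrt (∑ z, P (s, z)))⁻¹
          = (∑ z, P (s, z))⁻¹ := by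
        rw [← mul_inv, Real.mul_self_sqrt hs.le]
      have hTT : (Real.sqrt (∑ c : dualSet C, P (s, j0 + (c : Fin m → ZMod 2))))⁻¹ *
            (Real.sqrt (∑ c : dualSet C, P (s, j0 + (c : Fin m → ZMod 2))))⁻¹
          = (∑ c : dualSet C, P (s, j0 + (c : Fin m → ZMod 2)))⁻¹ := by
        rw [← mul_inv, Real.mul_self_sqrt hTpos.le]
      calc (↑(Fintype.card C) : ℝ)⁻¹ *
            ((Real.sqrt (∑ z, P (s, z)))⁻¹ * (Real.sqrt (∑ z, P (s, z)))⁻¹ *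
              (Real.sqrt (P (s, p2)) * Real.sqrt (P (s, q2))) * sgn a (p2 + q2) *
              (↑(Fintype.card C) : ℝ))
          = ((↑(Fintype.card C) : ℝ) * (↑(Fintype.card C) : ℝ)⁻¹) *
            (((Real.sqrt (∑ z, P (s, z)))⁻¹ * (Real.sqrt (∑ z, P (s, z)))⁻¹) *
              (sgn a (p2 + q2) * (Real.sqrt (P (s, p2)) * Real.sqrt (P (s, q2))))) := by
            ring
        _ = (∑ z, P (s, z))⁻¹ *
            (sgn a (p2 + q2) * (Real.sqrt (P (s, p2)) * Real.sqrt (P (s, q2)))) := by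
            rw [mul_inv_cancel₀ hcard, hAA, one_mul]
        _ = ((∑ c : dualSet C, P (s, j0 + (c : Fin m → ZMod 2))) *
              ((Real.sqrt (∑ c : dualSet C, P (s, j0 + (c : Fin m → ZMod 2))))⁻¹ *
                (Real.sqrt (∑ c : dualSet C, P (s, j0 + (c : Fin m → ZMod 2))))⁻¹)) *
            ((∑ z, P (s, z))⁻¹ *
              ((sgn a (p2 - j0) * sgn a (q2 - j0)) *
                (Real.sqrt (P (s, p2)) * Real.sqrt (P (s, q2))))) := by
            rw [hTT, mul_inv_cancel₀ hT0, hGG, one_mul]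
        _ = ((∑ c : dualSet C, P (s, j0 + (c : Fin m → ZMod 2))) / ∑ z, P (s, z)) *
            ((Real.sqrt (∑ c : dualSet C, P (s, j0 + (c : Fin m → ZMod 2))))⁻¹ *
              (sgn a (p2 - j0) * Real.sqrt (P (s, p2))) *
              ((Real.sqrt (∑ c : dualSet C, P (s, j0 + (c : Fin m → ZMod 2))))⁻¹ *
                (sgn a (q2 - j0) * Real.sqrt (P (s, q2))))) := by
            ring
  · rw [if_neg hw]
    have hq2D : ¬(q2 - j0 ∈ dualSet C) := fun h => hw (by
      have hid : (p2 - j0) + (q2 - j0) = p2 + q2 := by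
        have h2 := addSelf j0
        calc (p2 - j0) + (q2 - j0) = (p2 + q2) - (j0 + j0) := by abel
          _ = p2 + q2 := by rw [h2, sub_zero]
      exact hid ▸ dual_add hj0D h)
    rw [if_neg (fun hh : True ∧ q2 - j0 ∈ dualSet C => hq2D hh.2)]
    ring
end
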